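/- arXiv:1905.06865 — 4 statements merged into one kernel-verified Lean document; each statement's English description precedes it below -/
import Mathlib

section
/- For a trace class operator L on a separable Hilbert space, |tr L| ≤ ‖L‖₁, and equality holds if and only if there exists a complex number z with |z| = 1 such that zL is a positive semidefinite operator. -/
noncomputable section

open Filter Topology

local notation "⟪" x ", " y "⟫" => @inner ℂ _ _ x y

/-- The trace norm of a bounded operator on a complex Hilbert space, defined as the
supremum over all pairs of finite orthonormal families of `∑ i, ‖⟪L (x i), y i⟫‖`.
For trace class operators this equals the sum of the singular values, and an operator
is trace class iff this is finite. -/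
def traceNorm {H : Type*} [NormedAddCommGroup H] [InnerProductSpace ℂ H]
    (L : H →L[ℂ] H) : ENNReal :=
  ⨆ (n : ℕ) (x : Fin n → H) (_ : Orthonormal ℂ x) (y : Fin n → H) (_ : Orthonormal ℂ y),
    ∑ i, (‖⟪L (x i), y i⟫‖₊ : ENNReal)

/-- index set of a chosen Hilbert basis of `H` -/
def hIndex (H : Type*) [NormedAddCommGroup H] [InnerProductSpace ℂ H] [CompleteSpace H] :
    Set H :=
  (exists_hilbertBasis ℂ H).choose

/-- a chosen Hilbert basis of `H` -/
def hBasis (H : Type*) [NormedAddCommGroup H] [InnerProductSpace ℂ H] [CompleteSpace H] :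
    HilbertBasis (hIndex H) ℂ H :=
  (exists_hilbertBasis ℂ H).choose_spec.choose

/-- the trace of an operator (meaningful for trace class operators, where it is
independent of the chosen Hilbert basis) -/
def opTrace {H : Type*} [NormedAddCommGroup H] [InnerProductSpace ℂ H] [CompleteSpace H]
    (L : H →L[ℂ] H) : ℂ :=
  ∑' i : hIndex H, ⟪(hBasis H i : H), L (hBasis H i)⟫

set_option linter.unusedSectionVars false

namespace TP
variable {H : Type*} [NormedAddCommGroup H] [InnerProductSpace ℂ H] [CompleteSpace H]

lemma sum_le_traceNorm (L : H →L[ℂ] H) {ι : Type*} [Fintype ι] {x y : ι → H}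
    (hx : Orthonormal ℂ x) (hy : Orthonormal ℂ y) :
    ∑ i, (‖⟪L (x i), y i⟫‖₊ : ENNReal) ≤ traceNorm L := by
  classical
  obtain ⟨σ⟩ : Nonempty (Fin (Fintype.card ι) ≃ ι) := ⟨(Fintype.equivFin ι).symm⟩
  calc ∑ i, (‖⟪L (x i), y i⟫‖₊ : ENNReal)
      = ∑ k, (‖⟪L (x (σ k)), y (σ k)⟫‖₊ : ENNReal) := (Equiv.sum_comp σ _).symm
    _ ≤ traceNorm L := by
        refine le_iSup_of_le (Fintype.card ι) ?_
        refine le_iSup_of_le (x ∘ σ) ?_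
        refine le_iSup_of_le (hx.comp σ σ.injective) ?_
        refine le_iSup_of_le (y ∘ σ) ?_
        exact le_iSup_of_le (hy.comp σ σ.injective) le_rfl

lemma sum_norm_le_toReal (L : H →L[ℂ] H) (hL : traceNorm L ≠ ⊤) {ι : Type*} [Fintype ι]
    {x y : ι → H} (hx : Orthonormal ℂ x) (hy : Orthonormal ℂ y) :
    ∑ i, ‖⟪L (x i), y i⟫‖ ≤ (traceNorm L).toReal := by
  have h := ENNReal.toReal_mono hL (sum_le_traceNorm L hx hy)
  rwa [ENNReal.toReal_sum (by simp)] at h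

lemma traceNorm_le (L : H →L[ℂ] H) {C : ℝ}
    (h : ∀ (n : ℕ) (x y : Fin n → H), Orthonormal ℂ x → Orthonormal ℂ y →
      ∑ i, ‖⟪L (x i), y i⟫‖ ≤ C) :
    traceNorm L ≤ ENNReal.ofReal C := by
  refine iSup_le fun n => iSup_le fun x => iSup_le fun hx => iSup_le fun y => iSup_le fun hy => ?_
  calc ∑ i, (‖⟪L (x i), y i⟫‖₊ : ENNReal)
      = ENNReal.ofReal (∑ i, ‖⟪L (x i), y i⟫‖) := by
        rw [ENNReal.ofReal_sum_of_nonneg (fun i _ => norm_nonneg _)]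
        exact Finset.sum_congr rfl fun i _ => by rw [← coe_nnnorm, ENNReal.ofReal_coe_nnreal]
    _ ≤ ENNReal.ofReal C := ENNReal.ofReal_le_ofReal (h n x y hx hy)

lemma traceNorm_smul_unit (L : H →L[ℂ] H) {z : ℂ} (hz : ‖z‖ = 1) :
    traceNorm (z • L) = traceNorm L := by
  have key : ∀ (v w : H), (‖⟪(z • L) v, w⟫‖₊ : ENNReal) = (‖⟪L v, w⟫‖₊ : ENNReal) := by
    intro v w
    have : ⟪(z • L) v, w⟫ = (starRingEnd ℂ) z * ⟪L v, w⟫ := by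
      simp [inner_smul_left, mul_comm]
    rw [this]
    have hz' : ‖(starRingEnd ℂ) z‖₊ = 1 := by
      have : ‖(starRingEnd ℂ) z‖ = 1 := by rwa [RCLike.norm_conj]
      ext; simpa using this
    rw [nnnorm_mul, hz', one_mul]
  unfold traceNorm
  refine iSup_congr fun n => iSup_congr fun x => iSup_congr fun hx => iSup_congr fun y =>
    iSup_congr fun hy => Finset.sum_congr rfl fun i _ => ?_
  · exact key (x i) (y i)

lemma diag_sum_le (L : H →L[ℂ] H) (hL : traceNorm L ≠ ⊤) (s : Finset ↥(hIndex H)) :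
    ∑ i ∈ s, ‖⟪(hBasis H i : H), L (hBasis H i)⟫‖ ≤ (traceNorm L).toReal := by
  classical
  have hon : Orthonormal ℂ (fun i : ↥s => hBasis H i) :=
    (hBasis H).orthonormal.comp _ Subtype.val_injective
  have h := sum_norm_le_toReal L hL hon hon
  calc ∑ i ∈ s, ‖⟪(hBasis H i : H), L (hBasis H i)⟫‖
      = ∑ i : ↥s, ‖⟪(hBasis H (i : ↥(hIndex H)) : H), L (hBasis H i)⟫‖ :=
        (Finset.sum_coe_sort s _).symm
    _ = ∑ i : ↥s, ‖⟪L (hBasis H (i : ↥(hIndex H))), hBasis H i⟫‖ := by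
        refine Finset.sum_congr rfl fun i _ => ?_
        rw [norm_inner_symm]
    _ ≤ (traceNorm L).toReal := h

lemma diag_summable (L : H →L[ℂ] H) (hL : traceNorm L ≠ ⊤) :
    Summable fun i : hIndex H => ‖⟪(hBasis H i : H), L (hBasis H i)⟫‖ :=
  summable_of_sum_le (fun _ => norm_nonneg _) (diag_sum_le L hL)

lemma diag_tsum_le (L : H →L[ℂ] H) (hL : traceNorm L ≠ ⊤) :
    ∑' i : hIndex H, ‖⟪(hBasis H i : H), L (hBasis H i)⟫‖ ≤ (traceNorm L).toReal :=
  Summable.tsum_le_of_sum_le (diag_summable L hL) (diag_sum_le L hL)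

lemma summable_diag (L : H →L[ℂ] H) (hL : traceNorm L ≠ ⊤) :
    Summable fun i : hIndex H => ⟪(hBasis H i : H), L (hBasis H i)⟫ :=
  (diag_summable L hL).of_norm

lemma norm_opTrace_le (L : H →L[ℂ] H) (hL : traceNorm L ≠ ⊤) :
    ‖opTrace L‖ ≤ (traceNorm L).toReal :=
  le_trans (norm_tsum_le_tsum_norm (diag_summable L hL)) (diag_tsum_le L hL)

lemma sqrt_exists (A : H →L[ℂ] H) (hA : A.IsPositive) :
    ∃ S : H →L[ℂ] H, S.IsPositive ∧ S * S = A := by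
  refine ⟨CFC.sqrt A, ?_, ?_⟩
  · rw [← ContinuousLinearMap.nonneg_iff_isPositive]; exact CFC.sqrt_nonneg A
  · rw [← sq]; exact CFC.sq_sqrt A ((ContinuousLinearMap.nonneg_iff_isPositive A).2 hA)

lemma parseval_sq (v : H) :
    HasSum (fun i : hIndex H => ‖⟪(hBasis H i : H), v⟫‖ ^ 2) (‖v‖ ^ 2) := by
  have h := ((hBasis H).hasSum_inner_mul_inner v v).mapL Complex.reCLM
  have h1 : (fun i : hIndex H =>
      Complex.reCLM (⟪v, (hBasis H i : H)⟫ * ⟪(hBasis H i : H), v⟫))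
        = fun i : hIndex H => ‖⟪(hBasis H i : H), v⟫‖ ^ 2 := by
    funext i
    have hz : ⟪v, (hBasis H i : H)⟫ = (starRingEnd ℂ) ⟪(hBasis H i : H), v⟫ :=
      (inner_conj_symm v (hBasis H i : H)).symm
    rw [hz]
    simp only [Complex.reCLM_apply]
    rw [← Complex.normSq_eq_conj_mul_self, Complex.ofReal_re, Complex.normSq_eq_norm_sq]
  have h2 : Complex.reCLM ⟪v, v⟫ = ‖v‖ ^ 2 := by
    rw [inner_self_eq_norm_sq_to_K (𝕜 := ℂ) v]
    simp [← Complex.ofReal_pow]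
  rw [h2, h1] at h
  exact h

lemma pos_sum_le (A : H →L[ℂ] H) (hA : traceNorm A ≠ ⊤) (hp : A.IsPositive)
    {ι : Type*} [Fintype ι] {x y : ι → H} (hx : Orthonormal ℂ x) (hy : Orthonormal ℂ y) :
    ∑ k, ‖⟪A (x k), y k⟫‖ ≤
      ∑' i : hIndex H, ‖⟪(hBasis H i : H), A (hBasis H i)⟫‖ := by
  classical
  obtain ⟨S, hSpos, hSS⟩ := sqrt_exists A hp
  have hsym0 : (S : H →ₗ[ℂ] H).IsSymmetric :=
    hSpos.1
  have hsym : ∀ v w : H, ⟪S v, w⟫ = ⟪v, S w⟫ := fun v w => hsym0 v w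
  have hAv : ∀ v w : H, ⟪A v, w⟫ = ⟪S v, S w⟫ := by
    intro v w
    have hA' : A v = S (S v) := by rw [← hSS]; rfl
    rw [hA']; exact hsym0 (S v) w
  have hdiag : ∀ i : hIndex H,
      ‖⟪(hBasis H i : H), A (hBasis H i)⟫‖ = ‖S (hBasis H i)‖ ^ 2 := by
    intro i
    rw [norm_inner_symm, hAv, inner_self_eq_norm_sq_to_K]
    simp
  have hDsummable : Summable fun i : hIndex H => ‖S (hBasis H i)‖ ^ 2 := by
    have := diag_summable A hA
    simpa only [hdiag] using this
  set D : ℝ := ∑' i : hIndex H, ‖⟪(hBasis H i : H), A (hBasis H i)⟫‖ with hD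
  have hDeq : D = ∑' i : hIndex H, ‖S (hBasis H i)‖ ^ 2 := tsum_congr hdiag
  -- Bessel-type bound
  have bound2 : ∀ {w : ι → H}, Orthonormal ℂ w → ∑ k, ‖S (w k)‖ ^ 2 ≤ D := by
    intro w hw
    have h1 : ∀ k, ‖S (w k)‖ ^ 2
        = ∑' i : hIndex H, ‖⟪(hBasis H i : H), S (w k)⟫‖ ^ 2 :=
      fun k => (parseval_sq (S (w k))).tsum_eq.symm
    calc ∑ k, ‖S (w k)‖ ^ 2
        = ∑ k, ∑' i : hIndex H, ‖⟪(hBasis H i : H), S (w k)⟫‖ ^ 2 :=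
          Finset.sum_congr rfl fun k _ => h1 k
      _ = ∑' i : hIndex H, ∑ k, ‖⟪(hBasis H i : H), S (w k)⟫‖ ^ 2 :=
          (Summable.tsum_finsetSum fun k _ => (parseval_sq (S (w k))).summable).symm
      _ ≤ ∑' i : hIndex H, ‖S (hBasis H i)‖ ^ 2 := by
          refine Summable.tsum_le_tsum (fun i => ?_) ?_ hDsummable
          · have h2 : ∀ k, ‖⟪(hBasis H i : H), S (w k)⟫‖ ^ 2
                = ‖⟪w k, S (hBasis H i : H)⟫‖ ^ 2 := by
              intro k
              rw [← hsym (hBasis H i : H) (w k), norm_inner_symm]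
              
            rw [Finset.sum_congr rfl fun k _ => h2 k]
            exact hw.sum_inner_products_le (S (hBasis H i))
          · exact summable_sum fun k _ => (parseval_sq (S (w k))).summable
      _ = D := hDeq.symm
  have bound1 : ∀ k, ‖⟪A (x k), y k⟫‖ ≤ (‖S (x k)‖ ^ 2 + ‖S (y k)‖ ^ 2) / 2 := by
    intro k
    rw [hAv]
    have h1 := norm_inner_le_norm (𝕜 := ℂ) (S (x k)) (S (y k))
    nlinarith [sq_nonneg (‖S (x k)‖ - ‖S (y k)‖), norm_nonneg (⟪S (x k), S (y k)⟫)]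
  calc ∑ k, ‖⟪A (x k), y k⟫‖
      ≤ ∑ k, (‖S (x k)‖ ^ 2 + ‖S (y k)‖ ^ 2) / 2 := Finset.sum_le_sum fun k _ => bound1 k
    _ = ((∑ k, ‖S (x k)‖ ^ 2) + ∑ k, ‖S (y k)‖ ^ 2) / 2 := by
        rw [← Finset.sum_add_distrib, ← Finset.sum_div]
    _ ≤ (D + D) / 2 := by
        have := bound2 hx; have := bound2 hy; linarith
    _ = D := by ring

lemma basis_trace_eq {V : Submodule ℂ H} {ι κ : Type*} [Fintype ι] [Fintype κ]
    (b : OrthonormalBasis ι ℂ V) (c : OrthonormalBasis κ ℂ V) (T : H →L[ℂ] H) :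
    ∑ k, ⟪(b k : H), T (b k : H)⟫ = ∑ j, ⟪(c j : H), T (c j : H)⟫ := by
  classical
  have hexp : ∀ v : V, (v : H) = ∑ j, ⟪(c j : H), (v : H)⟫ • (c j : H) := by
    intro v
    calc (v : H) = ((∑ j, ⟪c j, v⟫ • c j : V) : H) := by rw [c.sum_repr' v]
      _ = ∑ j, ⟪(c j : H), (v : H)⟫ • (c j : H) := by
          push_cast
          exact Finset.sum_congr rfl fun j _ => by rw [Submodule.coe_inner]
  have step1 : ∀ k, ⟪(b k : H), T (b k : H)⟫
      = ∑ j, ⟪(c j : H), (b k : H)⟫ * ⟪(b k : H), T (c j : H)⟫ := by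
    intro k
    have hT : T (b k : H) = ∑ j, ⟪(c j : H), (b k : H)⟫ • T (c j : H) := by
      conv_lhs => rw [hexp (b k)]
      rw [map_sum]
      exact Finset.sum_congr rfl fun j _ => by rw [map_smul]
    rw [hT, inner_sum]
    exact Finset.sum_congr rfl fun j _ => by rw [inner_smul_right]
  have step2 : ∀ (u : H) k, ⟪(b k : H), u⟫
      = ∑ i, (starRingEnd ℂ) ⟪(c i : H), (b k : H)⟫ * ⟪(c i : H), u⟫ := by
    intro u k
    conv_lhs => rw [hexp (b k)]
    rw [sum_inner]
    exact Finset.sum_congr rfl fun i _ => by rw [inner_smul_left]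
  have horth : ∀ k : κ, ∀ i : κ, (∑ m, ⟪(c k : H), (b m : H)⟫ * ⟪(b m : H), (c i : H)⟫)
      = if k = i then 1 else 0 := by
    intro k i
    have h := b.sum_inner_mul_inner (c k) (c i)
    have h2 : ⟪c k, c i⟫ = if k = i then (1 : ℂ) else 0 := orthonormal_iff_ite.mp c.orthonormal k i
    rw [h2] at h
    rw [← h]
    refine Finset.sum_congr rfl fun m _ => ?_
    rw [Submodule.coe_inner, Submodule.coe_inner]
  calc ∑ k, ⟪(b k : H), T (b k : H)⟫
      = ∑ k, ∑ j, ∑ i, ⟪(c j : H), (b k : H)⟫ *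
          ((starRingEnd ℂ) ⟪(c i : H), (b k : H)⟫ * ⟪(c i : H), T (c j : H)⟫) := by
        refine Finset.sum_congr rfl fun k _ => ?_
        rw [step1 k]
        refine Finset.sum_congr rfl fun j _ => ?_
        rw [step2 (T (c j : H)) k, Finset.mul_sum]
    _ = ∑ j, ∑ i, (∑ k, ⟪(c j : H), (b k : H)⟫ * ⟪(b k : H), (c i : H)⟫) *
          ⟪(c i : H), T (c j : H)⟫ := by
        rw [Finset.sum_comm]
        refine Finset.sum_congr rfl fun j _ => ?_
        rw [Finset.sum_comm]
        refine Finset.sum_congr rfl fun i _ => ?_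
        rw [Finset.sum_mul]
        refine Finset.sum_congr rfl fun k _ => ?_
        rw [inner_conj_symm]
        ring
    _ = ∑ j, ⟪(c j : H), T (c j : H)⟫ := by
        refine Finset.sum_congr rfl fun j _ => ?_
        rw [show (∑ i, (∑ k, ⟪(c j : H), (b k : H)⟫ * ⟪(b k : H), (c i : H)⟫) *
            ⟪(c i : H), T (c j : H)⟫)
          = ∑ i, (if j = i then (1:ℂ) else 0) * ⟪(c i : H), T (c j : H)⟫ from
          Finset.sum_congr rfl fun i _ => by rw [horth j i]]
        simp

lemma complex_re_eq_norm {z : ℂ} (h : ‖z‖ = z.re) : z = ((‖z‖ : ℝ) : ℂ) := by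
  have h1 : ‖z‖ ^ 2 = z.re * z.re + z.im * z.im := by
    rw [Complex.sq_norm]; rfl
  have h2 : ‖z‖ = ‖z‖ := rfl
  have h4 : ‖z‖ ^ 2 = z.re * z.re := by rw [← h2, h]; ring
  have h3 : z.im * z.im = 0 := by linarith
  have him : z.im = 0 := mul_self_eq_zero.mp h3
  apply Complex.ext
  · simp [h.symm]
  · simp [him]

lemma span_family_bound [DecidableEq H] (A : H →L[ℂ] H) (hA : traceNorm A ≠ ⊤)
    (s : Finset ↥(hIndex H)) {ι : Type*} [Fintype ι] {x : ι → H}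
    (hx : Orthonormal ℂ x)
    (hxV : ∀ k, x k ∈ Submodule.span ℂ
      ((s.image fun i : ↥(hIndex H) => (hBasis H i : H) : Finset H) : Set H)) :
    ∑ k, ‖⟪A (x k), x k⟫‖ ≤ (traceNorm A).toReal
      - ∑' i : hIndex H, ‖⟪(hBasis H i : H), A (hBasis H i)⟫‖
      + ∑ i ∈ s, ‖⟪(hBasis H i : H), A (hBasis H i)⟫‖ := by
  classical
  set g : ↥(hIndex H) → ℝ := fun i => ‖⟪(hBasis H i : H), A (hBasis H i)⟫‖ with hg
  have hgsum : Summable g := diag_summable A hA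
  have horth : ∀ (i' : ↥(hIndex H)), i' ∉ s → ∀ v ∈ Submodule.span ℂ
      ((s.image fun i : ↥(hIndex H) => (hBasis H i : H) : Finset H) : Set H),
      ⟪v, (hBasis H i' : H)⟫ = 0 := by
    intro i' hi' v hv
    induction hv using Submodule.span_induction with
    | mem y hy =>
        rw [Finset.coe_image, Set.mem_image] at hy
        obtain ⟨j, hj, rfl⟩ := hy
        have hji : j ≠ i' := fun h => hi' (h ▸ (Finset.mem_coe.mp hj))
        exact (hBasis H).orthonormal.2 hji
    | zero => exact inner_zero_left _
    | add y z _ _ hy hz => rw [inner_add_left, hy, hz, add_zero]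
    | smul a y _ hy => rw [inner_smul_left, hy, mul_zero]
  refine le_of_forall_pos_le_add fun ε hε => ?_
  have hhs : HasSum g (∑' i, g i) := hgsum.hasSum
  have htend := Metric.tendsto_nhds.mp hhs ε hε
  obtain ⟨s₀, hs₀⟩ := Filter.eventually_atTop.mp htend
  set s'' := s₀ ∪ s with hs''
  have hdist : dist (∑ i ∈ s'', g i) (∑' i, g i) < ε := hs₀ s'' Finset.subset_union_left
  set s' := s'' \ s with hs'
  let f : ι ⊕ ↥s' → H := Sum.elim x fun i => (hBasis H i.1 : H)
  have hf : Orthonormal ℂ f := by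
    rw [orthonormal_iff_ite]
    rintro (k | a) (l | b)
    · simpa [f] using orthonormal_iff_ite.mp hx k l
    · have hb : (b : ↥(hIndex H)) ∉ s := (Finset.mem_sdiff.mp b.2).2
      simp only [f, Sum.elim_inl, Sum.elim_inr]
      rw [horth b hb (x k) (hxV k)]
      simp
    · have ha : (a : ↥(hIndex H)) ∉ s := (Finset.mem_sdiff.mp a.2).2
      simp only [f, Sum.elim_inl, Sum.elim_inr]
      rw [← inner_conj_symm, horth a ha (x l) (hxV l)]
      simp
    · simp only [f, Sum.elim_inr]
      have := orthonormal_iff_ite.mp (hBasis H).orthonormal (a : ↥(hIndex H)) b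
      rw [this]
      by_cases hab : a = b
      · simp [hab]
      · have : (a : ↥(hIndex H)) ≠ (b : ↥(hIndex H)) := fun h => hab (Subtype.ext h)
        simp [hab, this]
  have hbound := sum_norm_le_toReal A hA hf hf
  rw [Fintype.sum_sum_type] at hbound
  have h2 : ∑ i : ↥s', ‖⟪A (f (Sum.inr i)), f (Sum.inr i)⟫‖ = ∑ i ∈ s', g i := by
    rw [← Finset.sum_coe_sort s' g]
    refine Finset.sum_congr rfl fun i _ => ?_
    simp only [f, Sum.elim_inr, hg]
    rw [norm_inner_symm]
  have h3 : ∑ i ∈ s', g i + ∑ i ∈ s, g i = ∑ i ∈ s'', g i :=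
    Finset.sum_sdiff (Finset.subset_union_right)
  have h4 : ∑ i ∈ s'', g i > (∑' i, g i) - ε := by
    have := abs_lt.mp (by simpa [Real.dist_eq] using hdist)
    linarith [this.1]
  have h5 : ∑ i : ι, ‖⟪A (f (Sum.inl i)), f (Sum.inl i)⟫‖ = ∑ k, ‖⟪A (x k), x k⟫‖ := by
    refine Finset.sum_congr rfl fun k _ => ?_
    simp [f]
  rw [h5, h2] at hbound
  linarith [h3, h4, hbound]

lemma inner_eq_norm_on_span [DecidableEq H] (A : H →L[ℂ] H) (hA : traceNorm A ≠ ⊤)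
    (hT : ∑' i : hIndex H, ‖⟪(hBasis H i : H), A (hBasis H i)⟫‖ = (traceNorm A).toReal)
    (hre : ∀ i : ↥(hIndex H), ⟪(hBasis H i : H), A (hBasis H i)⟫
      = ((‖⟪(hBasis H i : H), A (hBasis H i)⟫‖ : ℝ) : ℂ))
    (s : Finset ↥(hIndex H)) (u : H)
    (hu : u ∈ Submodule.span ℂ
      ((s.image fun i : ↥(hIndex H) => (hBasis H i : H) : Finset H) : Set H))
    (hnu : ‖u‖ = 1) :
    ⟪u, A u⟫ = ((‖⟪u, A u⟫‖ : ℝ) : ℂ) := by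
  classical
  set V := Submodule.span ℂ
    ((s.image fun i : ↥(hIndex H) => (hBasis H i : H) : Finset H) : Set H) with hV
  let c : OrthonormalBasis ↥s ℂ ↥V := OrthonormalBasis.span (hBasis H).orthonormal s
  haveI : FiniteDimensional ℂ ↥V := Module.Finite.of_basis c.toBasis
  set u' : ↥V := ⟨u, hu⟩ with hu'
  have hON : Orthonormal ℂ (Subtype.val : ({u'} : Set ↥V) → ↥V) := by
    rw [orthonormal_iff_ite]
    rintro ⟨a, ha⟩ ⟨b, hb⟩
    simp only [Set.mem_singleton_iff] at ha hb
    subst ha; subst hb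
    simp only [if_pos rfl]
    have hnu' : ‖u'‖ = 1 := hnu
    rw [inner_self_eq_norm_sq_to_K, hnu']
    norm_num
  obtain ⟨w, b, hw, hb⟩ := hON.exists_orthonormalBasis_extension
  have htr := basis_trace_eq b c A
  have hcj : ∀ j : ↥s, ((c j : ↥V) : H) = (hBasis H (j : ↥(hIndex H)) : H) := fun j =>
    OrthonormalBasis.span_apply (hBasis H).orthonormal s j
  set t : ↥(hIndex H) → ℂ := fun i => ⟪(hBasis H i : H), A (hBasis H i)⟫ with hts
  have hRHS : ∑ j : ↥s, ⟪((c j : ↥V) : H), A ((c j : ↥V) : H)⟫ = ∑ i ∈ s, t i := by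
    rw [← Finset.sum_coe_sort s t]
    exact Finset.sum_congr rfl fun j _ => by rw [hcj j]
  have hbON : Orthonormal ℂ (fun k : ↥w => ((b k : ↥V) : H)) := by
    rw [orthonormal_iff_ite]
    intro k l
    rw [← Submodule.coe_inner]
    exact orthonormal_iff_ite.mp b.orthonormal k l
  have hbmem : ∀ k : ↥w, ((b k : ↥V) : H) ∈ V := fun k => (b k).2
  have h5 := span_family_bound A hA s hbON hbmem
  rw [hT] at h5
  have h5' : ∑ k : ↥w, ‖⟪((b k : ↥V) : H), A ((b k : ↥V) : H)⟫‖
      ≤ ∑ i ∈ s, ‖t i‖ := by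
    calc ∑ k : ↥w, ‖⟪((b k : ↥V) : H), A ((b k : ↥V) : H)⟫‖
        = ∑ k : ↥w, ‖⟪A ((b k : ↥V) : H), ((b k : ↥V) : H)⟫‖ :=
          Finset.sum_congr rfl fun k _ => norm_inner_symm _ _
      _ ≤ _ := by simp only [hts]; linarith [h5]
  -- ∑ q k is real, equal to ∑ i ∈ s, ‖t i‖
  have hsum_eq : ∑ k : ↥w, ⟪((b k : ↥V) : H), A ((b k : ↥V) : H)⟫
      = ((∑ i ∈ s, ‖t i‖ : ℝ) : ℂ) := by
    rw [htr, hRHS, Complex.ofReal_sum]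
    exact Finset.sum_congr rfl fun i _ => hre i
  -- squeeze
  set q : ↥w → ℂ := fun k => ⟪((b k : ↥V) : H), A ((b k : ↥V) : H)⟫ with hq
  have hre_sum : ∑ k, (q k).re = ∑ i ∈ s, ‖t i‖ := by
    have := congrArg Complex.re hsum_eq
    simpa [Complex.re_sum] using this
  have hterm : ∀ k, ‖q k‖ = (q k).re := by
    have hzero : ∑ k, (‖q k‖ - (q k).re) = 0 := by
      rw [Finset.sum_sub_distrib, hre_sum]
      have := h5'
      have hge : ∑ i ∈ s, ‖t i‖ ≤ ∑ k, ‖q k‖ := by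
        calc ∑ i ∈ s, ‖t i‖ = ∑ k, (q k).re := hre_sum.symm
          _ ≤ ∑ k, ‖q k‖ := Finset.sum_le_sum fun k _ => Complex.re_le_norm (q k)
      linarith
    have hnn : ∀ k ∈ Finset.univ, (0:ℝ) ≤ ‖q k‖ - (q k).re :=
      fun k _ => sub_nonneg.mpr (Complex.re_le_norm (q k))
    intro k
    have := (Finset.sum_eq_zero_iff_of_nonneg hnn).mp hzero k (Finset.mem_univ k)
    linarith
  -- specialize at u
  have hu'w : u' ∈ w := hw rfl
  set k₀ : ↥w := ⟨u', hu'w⟩ with hk₀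
  have hbk₀ : ((b k₀ : ↥V) : H) = u := by
    have : b k₀ = u' := by rw [hb]
    rw [this]
  have hfin := complex_re_eq_norm (hterm k₀)
  simp only [hq, hbk₀] at hfin
  exact hfin

set_option maxHeartbeats 1000000 in
lemma isPositive_of_opTrace_eq (A : H →L[ℂ] H) (hA : traceNorm A ≠ ⊤)
    (heq : (∑' i : hIndex H, ⟪(hBasis H i : H), A (hBasis H i)⟫)
      = (((traceNorm A).toReal : ℝ) : ℂ)) : A.IsPositive := by
  classical
  set T := (traceNorm A).toReal with hTdef
  set t : ↥(hIndex H) → ℂ := fun i => ⟪(hBasis H i : H), A (hBasis H i)⟫ with hts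
  have hnorm_summable : Summable (fun i => ‖t i‖) := diag_summable A hA
  have hsummable : Summable t := hnorm_summable.of_norm
  have htsum : ∑' i, t i = (T : ℂ) := heq
  have hre_summable : Summable fun i => (t i).re :=
    (hsummable.hasSum.mapL Complex.reCLM).summable
  have hretsum : ∑' i, (t i).re = T := by
    have h := (hsummable.hasSum.mapL Complex.reCLM).tsum_eq
    simp only [Complex.reCLM_apply] at h
    rw [h, htsum]
    simp
  have hnormtsum : ∑' i, ‖t i‖ ≤ T := diag_tsum_le A hA
  have hterm : ∀ i, ‖t i‖ = (t i).re := by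
    have hsub : Summable (fun i => ‖t i‖ - (t i).re) := hnorm_summable.sub hre_summable
    have hzero : ∑' i, (‖t i‖ - (t i).re) = 0 := by
      rw [Summable.tsum_sub hnorm_summable hre_summable, hretsum]
      have hge : (0:ℝ) ≤ ∑' i, (‖t i‖ - (t i).re) := by
        refine tsum_nonneg fun i => sub_nonneg.mpr (Complex.re_le_norm (t i))
      rw [Summable.tsum_sub hnorm_summable hre_summable, hretsum] at hge
      linarith
    intro i
    have hle : ‖t i‖ - (t i).re ≤ 0 :=
      hzero ▸ Summable.le_tsum hsub i fun j _ => sub_nonneg.mpr (Complex.re_le_norm (t j))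
    have hge : (0:ℝ) ≤ ‖t i‖ - (t i).re := sub_nonneg.mpr (Complex.re_le_norm (t i))
    linarith
  have hre : ∀ i : ↥(hIndex H), t i = ((‖t i‖ : ℝ) : ℂ) :=
    fun i => complex_re_eq_norm (hterm i)
  have hT2 : ∑' i, ‖t i‖ = T := by
    rw [tsum_congr hterm]; exact hretsum
  -- per-vector property on the span
  have hspan : ∀ x : H,
      x ∈ Submodule.span ℂ (Set.range fun i : ↥(hIndex H) => (hBasis H i : H)) →
      (⟪x, A x⟫.im = 0 ∧ 0 ≤ ⟪x, A x⟫.re) := by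
    intro x hx
    by_cases hx0 : x = 0
    · subst hx0; simp
    obtain ⟨tf, htf, hxtf⟩ := Submodule.mem_span_finite_of_mem_span hx
    have hinj : Function.Injective (fun i : ↥(hIndex H) => (hBasis H i : H)) :=
      (hBasis H).orthonormal.linearIndependent.injective
    set s : Finset ↥(hIndex H) := tf.preimage _ hinj.injOn with hsdef
    have himg : s.image (fun i : ↥(hIndex H) => (hBasis H i : H)) = tf := by
      rw [hsdef, Finset.image_preimage]
      exact Finset.filter_true_of_mem fun z hz => htf hz
    have hxV : x ∈ Submodule.span ℂ
        ((s.image fun i : ↥(hIndex H) => (hBasis H i : H) : Finset H) : Set H) := by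
      rw [himg]; exact hxtf
    set u : H := (‖x‖ : ℂ)⁻¹ • x with hudef
    have hu : u ∈ Submodule.span ℂ
        ((s.image fun i : ↥(hIndex H) => (hBasis H i : H) : Finset H) : Set H) :=
      Submodule.smul_mem _ _ hxV
    have hnu : ‖u‖ = 1 := by
      rw [hudef, norm_smul]
      simp [norm_inv, hx0, norm_ne_zero_iff.mpr hx0]
    have h6 := inner_eq_norm_on_span A hA hT2 hre s u hu hnu
    have hxu : ⟪x, A x⟫ = ((‖x‖ ^ 2 : ℝ) : ℂ) * ⟪u, A u⟫ := by
      have hx' : x = (‖x‖ : ℂ) • u := by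
        rw [hudef, smul_smul]
        rw [mul_inv_cancel₀ (by exact_mod_cast norm_ne_zero_iff.mpr hx0), one_smul]
      conv_lhs => rw [hx']
      rw [map_smul, inner_smul_left, inner_smul_right]
      rw [Complex.conj_ofReal]
      push_cast
      ring
    rw [hxu, h6, ← Complex.ofReal_mul]
    constructor
    · exact Complex.ofReal_im _
    · rw [Complex.ofReal_re]; positivity
  have hcont : Continuous fun x : H => ⟪x, A x⟫ :=
    Continuous.inner continuous_id A.continuous
  have hdense : Dense (↑(Submodule.span ℂ
      (Set.range fun i : ↥(hIndex H) => (hBasis H i : H))) : Set H) :=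
    Submodule.dense_iff_topologicalClosure_eq_top.mpr ((hBasis H).dense_span)
  have him : ∀ x : H, (⟪x, A x⟫).im = 0 := by
    have hclosed : IsClosed {x : H | (⟪x, A x⟫).im = 0} :=
      isClosed_eq (Complex.continuous_im.comp hcont) continuous_const
    intro x
    have hsub : (↑(Submodule.span ℂ
        (Set.range fun i : ↥(hIndex H) => (hBasis H i : H))) : Set H)
        ⊆ {x : H | (⟪x, A x⟫).im = 0} := fun y hy => (hspan y hy).1
    have hcl := closure_minimal hsub hclosed
    rw [hdense.closure_eq] at hcl
    exact hcl (Set.mem_univ x)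
  have hre0 : ∀ x : H, 0 ≤ (⟪x, A x⟫).re := by
    have hclosed : IsClosed {x : H | 0 ≤ (⟪x, A x⟫).re} :=
      isClosed_le continuous_const (Complex.continuous_re.comp hcont)
    intro x
    have hsub : (↑(Submodule.span ℂ
        (Set.range fun i : ↥(hIndex H) => (hBasis H i : H))) : Set H)
        ⊆ {x : H | 0 ≤ (⟪x, A x⟫).re} := fun y hy => (hspan y hy).2
    have hcl := closure_minimal hsub hclosed
    rw [hdense.closure_eq] at hcl
    exact hcl (Set.mem_univ x)
  constructor
  · rw [LinearMap.isSymmetric_iff_inner_map_self_real]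
    intro v
    have h2 : (starRingEnd ℂ) ⟪v, A v⟫ = ⟪v, A v⟫ :=
      Complex.conj_eq_iff_im.mpr (him v)
    simp only [ContinuousLinearMap.coe_coe]
    rw [← inner_conj_symm (A v) v]
    rw [h2]
    exact h2
  · intro x
    have h1 := hre0 x
    have h2 : ContinuousLinearMap.reApplyInnerSelf A x = (⟪x, A x⟫).re := by
      rw [ContinuousLinearMap.reApplyInnerSelf]
      rw [show ⟪A x, x⟫ = (starRingEnd ℂ) ⟪x, A x⟫ from (inner_conj_symm _ _).symm]
      simp
      rw [← inner_conj_symm (A x) x, Complex.conj_re]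
    rw [h2]; exact h1

lemma opTrace_smul (L : H →L[ℂ] H) (z : ℂ) :
    (∑' i : hIndex H, ⟪(hBasis H i : H), (z • L) (hBasis H i)⟫)
      = z * ∑' i : hIndex H, ⟪(hBasis H i : H), L (hBasis H i)⟫ := by
  rw [← tsum_mul_left]
  exact tsum_congr fun i => by rw [ContinuousLinearMap.smul_apply, inner_smul_right]

lemma orthonormal_single {x : H} (hx : ‖x‖ = 1) :
    Orthonormal ℂ (fun _ : Fin 1 => x) := by
  rw [orthonormal_iff_ite]
  intro i j
  have hij : i = j := Subsingleton.elim i j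
  subst hij
  simp [inner_self_eq_norm_sq_to_K, hx]

lemma eq_zero_of_traceNorm_eq_zero (L : H →L[ℂ] H) (h : traceNorm L = 0) : L = 0 := by
  ext x
  simp only [ContinuousLinearMap.zero_apply]
  by_contra hx
  have hx0 : x ≠ 0 := fun h' => hx (by rw [h']; simp)
  set u : H := (‖x‖ : ℂ)⁻¹ • x with hu
  have hnu : ‖u‖ = 1 := by
    rw [hu, norm_smul]
    simp [norm_inv, norm_ne_zero_iff.mpr hx0]
  have hLu : L u ≠ 0 := by
    rw [hu, map_smul]
    exact smul_ne_zero (by simpa using norm_ne_zero_iff.mpr hx0) hx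
  set v : H := (‖L u‖ : ℂ)⁻¹ • L u with hv
  have hnv : ‖v‖ = 1 := by
    rw [hv, norm_smul]
    simp [norm_inv, norm_ne_zero_iff.mpr hLu]
  have hb := sum_le_traceNorm L (orthonormal_single hnu) (orthonormal_single hnv)
  rw [h] at hb
  have hinner : ⟪L u, v⟫ = ((‖L u‖ : ℝ) : ℂ) := by
    rw [hv, inner_smul_right, inner_self_eq_norm_sq_to_K]
    have hne : (‖L u‖ : ℂ) ≠ 0 := by exact_mod_cast norm_ne_zero_iff.mpr hLu
    field_simp
    rfl
  have hz : (‖⟪L u, v⟫‖₊ : ENNReal) = 0 := by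
    have h1 : (‖⟪L u, v⟫‖₊ : ENNReal) ≤ 0 := by
      calc (‖⟪L u, v⟫‖₊ : ENNReal)
          = ∑ _i : Fin 1, (‖⟪L u, v⟫‖₊ : ENNReal) := by simp
        _ ≤ 0 := hb
    exact le_antisymm h1 zero_le
  rw [hinner] at hz
  simp only [ENNReal.coe_eq_zero, nnnorm_eq_zero, Complex.ofReal_eq_zero] at hz
  exact hLu (norm_eq_zero.mp hz)

lemma complex_nonneg_real {c : ℂ} (him : c.im = 0) (hre : 0 ≤ c.re) :
    c = ((‖c‖ : ℝ) : ℂ) := by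
  have h1 : ‖c‖ ^ 2 = c.re * c.re + c.im * c.im := by rw [Complex.sq_norm]; rfl
  have h2 : ‖c‖ = c.re := by nlinarith [norm_nonneg c]
  apply Complex.ext
  · simp only [Complex.ofReal_re]
    rw [h2]
  · simp [him]

end TP

/-- for a trace class `L`, `|tr L| ≤ ‖L‖₁`, with equality iff `zL` is
positive semidefinite for some unimodular `z`. -/
theorem abs_opTrace_le_traceNorm
    {H : Type*} [NormedAddCommGroup H] [InnerProductSpace ℂ H] [CompleteSpace H]
    [TopologicalSpace.SeparableSpace H]
    (L : H →L[ℂ] H) (hL : traceNorm L ≠ ⊤) :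
    ‖opTrace L‖ ≤ (traceNorm L).toReal ∧
    (‖opTrace L‖ = (traceNorm L).toReal ↔ ∃ z : ℂ, ‖z‖ = 1 ∧ (z • L).IsPositive) := by
  classical
  refine ⟨TP.norm_opTrace_le L hL, ?_, ?_⟩
  · intro hE
    by_cases h0 : opTrace L = 0
    · have hT0 : (traceNorm L).toReal = 0 := by rw [← hE, h0, norm_zero]
      have htn0 : traceNorm L = 0 := by
        rcases (ENNReal.toReal_eq_zero_iff _).mp hT0 with h | h
        · exact h
        · exact absurd h hL
      refine ⟨1, by norm_num, ?_⟩
      rw [TP.eq_zero_of_traceNorm_eq_zero L htn0, smul_zero]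
      exact ContinuousLinearMap.isPositive_zero
    · set w := opTrace L with hw
      set z : ℂ := (starRingEnd ℂ) w / (‖w‖ : ℂ) with hz
      have hwn : (‖w‖ : ℂ) ≠ 0 := by exact_mod_cast norm_ne_zero_iff.mpr h0
      have hznorm : ‖z‖ = 1 := by
        rw [hz, norm_div, RCLike.norm_conj, Complex.norm_real,
          Real.norm_of_nonneg (norm_nonneg w)]
        field_simp [norm_ne_zero_iff.mpr h0]
      refine ⟨z, hznorm, ?_⟩
      have htn : traceNorm (z • L) = traceNorm L := TP.traceNorm_smul_unit L hznorm
      apply TP.isPositive_of_opTrace_eq (z • L) (by rw [htn]; exact hL)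
      have h1 : (∑' i : hIndex H, ⟪(hBasis H i : H), (z • L) (hBasis H i)⟫) = z * w :=
        TP.opTrace_smul L z
      rw [h1, htn, ← hE]
      rw [hz, div_mul_eq_mul_div]
      have h2 : (starRingEnd ℂ) w * w = ((‖w‖ ^ 2 : ℝ) : ℂ) := by
        rw [← Complex.normSq_eq_conj_mul_self]
        norm_cast
        rw [Complex.normSq_eq_norm_sq]
      rw [h2]
      have hcast : ((‖w‖ : ℝ) : ℂ) ≠ 0 := hwn
      rw [show ((‖w‖ ^ 2 : ℝ) : ℂ) / ((‖w‖ : ℝ) : ℂ) = ((‖w‖ : ℝ) : ℂ) from by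
        push_cast
        rw [sq, mul_div_assoc, div_self hcast, mul_one]]
  · rintro ⟨z, hznorm, hpos⟩
    set A := z • L with hA'
    have htn : traceNorm A = traceNorm L := TP.traceNorm_smul_unit L hznorm
    have hA : traceNorm A ≠ ⊤ := by rw [htn]; exact hL
    have hsym : (A : H →ₗ[ℂ] H).IsSymmetric :=
      hpos.1
    have hdiag : ∀ x : H, ⟪x, A x⟫ = ((‖⟪x, A x⟫‖ : ℝ) : ℂ) := by
      intro x
      have h1 : (starRingEnd ℂ) ⟪A x, x⟫ = ⟪A x, x⟫ :=
        (LinearMap.isSymmetric_iff_inner_map_self_real _).mp hsym x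
      have him : (⟪A x, x⟫).im = 0 := Complex.conj_eq_iff_im.mp h1
      have hconj : ⟪x, A x⟫ = (starRingEnd ℂ) ⟪A x, x⟫ := (inner_conj_symm x (A x)).symm
      have him2 : (⟪x, A x⟫).im = 0 := by rw [hconj, Complex.conj_im, him, neg_zero]
      have hre2 : 0 ≤ (⟪x, A x⟫).re := by
        have h3 := hpos.2 x
        have h4 : ContinuousLinearMap.reApplyInnerSelf A x = (⟪A x, x⟫).re := by
          rw [ContinuousLinearMap.reApplyInnerSelf]; rfl
        rw [hconj]
        simp only [Complex.conj_re]
        rw [h4] at h3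
        exact h3
      exact TP.complex_nonneg_real him2 hre2
    have hnorm_summable := TP.diag_summable A hA
    set D : ℝ := ∑' i : hIndex H, ‖⟪(hBasis H i : H), A (hBasis H i)⟫‖ with hD
    have hD0 : 0 ≤ D := tsum_nonneg fun i => norm_nonneg _
    have hofsum := hnorm_summable.hasSum.mapL Complex.ofRealCLM
    have hfun : (fun i : ↥(hIndex H) =>
        Complex.ofRealCLM ‖⟪(hBasis H i : H), A (hBasis H i)⟫‖)
        = fun i : ↥(hIndex H) => ⟪(hBasis H i : H), A (hBasis H i)⟫ := by
      funext i
      simp only [Complex.ofRealCLM_apply]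
      exact (hdiag _).symm
    rw [hfun] at hofsum
    have hopA : opTrace A = ((D : ℝ) : ℂ) := hofsum.tsum_eq
    have hle : D ≤ (traceNorm A).toReal := TP.diag_tsum_le A hA
    have hge : (traceNorm A).toReal ≤ D := by
      have h5 : traceNorm A ≤ ENNReal.ofReal D :=
        TP.traceNorm_le A fun n x y hx hy => TP.pos_sum_le A hA hpos hx hy
      have h6 := ENNReal.toReal_mono ENNReal.ofReal_ne_top h5
      rwa [ENNReal.toReal_ofReal hD0] at h6
    have hDT : D = (traceNorm A).toReal := le_antisymm hle hge
    have hOA : opTrace A = z * opTrace L := TP.opTrace_smul L z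
    have hnorm : ‖opTrace L‖ = ‖opTrace A‖ := by
      rw [hOA, norm_mul, hznorm, one_mul]
    rw [hnorm, hopA, ← htn, ← hDT]
    simp [abs_of_nonneg hD0]
end
end

section
/- Let H = H₁ ⊗ H₂ be the Hilbert tensor product of two separable Hilbert spaces, and let F be a trace class operator on H. Then the partial traces tr₁F ∈ T(H₂) and tr₂F ∈ T(H₁) are trace class and satisfy ‖tr₁F‖₁ ≤ ‖F‖₁ and ‖tr₂F‖₁ ≤ ‖F‖₁. -/
noncomputable section

open Filter Topology

local notation "⟪" x ", " y "⟫" => @inner ℂ _ _ x y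

/-- `tp` realizes `H` as the Hilbert tensor product of `H₁` and `H₂`:
it is bilinear, satisfies `⟪x ⊗ y, u ⊗ v⟫ = ⟪x, u⟫⟪y, v⟫`, and the span of the
elementary tensors is dense in `H`. -/
structure IsHilbertTensor {H₁ H₂ H : Type*}
    [NormedAddCommGroup H₁] [InnerProductSpace ℂ H₁]
    [NormedAddCommGroup H₂] [InnerProductSpace ℂ H₂]
    [NormedAddCommGroup H] [InnerProductSpace ℂ H]
    (tp : H₁ → H₂ → H) : Prop where
  inner_tp : ∀ (x u : H₁) (y v : H₂), ⟪tp x y, tp u v⟫ = ⟪x, u⟫ * ⟪y, v⟫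
  add_left : ∀ (x x' : H₁) (y : H₂), tp (x + x') y = tp x y + tp x' y
  smul_left : ∀ (c : ℂ) (x : H₁) (y : H₂), tp (c • x) y = c • tp x y
  add_right : ∀ (x : H₁) (y y' : H₂), tp x (y + y') = tp x y + tp x y'
  smul_right : ∀ (c : ℂ) (x : H₁) (y : H₂), tp x (c • y) = c • tp x y
  dense_span : Dense (Submodule.span ℂ {v : H | ∃ x y, v = tp x y} : Set H)

/-- `C` is the partial trace over `H₂` (denoted `tr₂ F`) of the operator `F` on
`H = H₁ ⊗ H₂`: its matrix elements are `⟨(tr₂ F) x, y⟩ = ∑_j ⟨F (x ⊗ e_j), y ⊗ e_j⟩`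
for a Hilbert basis `(e_j)` of `H₂`; this characterizes the map determined by
`tr₂((x⊗y)(u⊗v)*) = ⟨y,v⟩ x u*`. -/
def IsPartialTrace₂ {H₁ H₂ H : Type*}
    [NormedAddCommGroup H₁] [InnerProductSpace ℂ H₁] [CompleteSpace H₁]
    [NormedAddCommGroup H₂] [InnerProductSpace ℂ H₂] [CompleteSpace H₂]
    [NormedAddCommGroup H] [InnerProductSpace ℂ H]
    (tp : H₁ → H₂ → H) (F : H →L[ℂ] H) (C : H₁ →L[ℂ] H₁) : Prop :=
  ∀ x y : H₁, ⟪y, C x⟫ = ∑' j : hIndex H₂, ⟪tp y (hBasis H₂ j), F (tp x (hBasis H₂ j))⟫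

/-- `D` is the partial trace over `H₁` (denoted `tr₁ F`) of the operator `F` on
`H = H₁ ⊗ H₂`. -/
def IsPartialTrace₁ {H₁ H₂ H : Type*}
    [NormedAddCommGroup H₁] [InnerProductSpace ℂ H₁] [CompleteSpace H₁]
    [NormedAddCommGroup H₂] [InnerProductSpace ℂ H₂] [CompleteSpace H₂]
    [NormedAddCommGroup H] [InnerProductSpace ℂ H]
    (tp : H₁ → H₂ → H) (F : H →L[ℂ] H) (D : H₂ →L[ℂ] H₂) : Prop :=
  ∀ u v : H₂, ⟪v, D u⟫ = ∑' i : hIndex H₁, ⟪tp (hBasis H₁ i) v, F (tp (hBasis H₁ i) u)⟫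

variable {H₁ H₂ H : Type*}
  [NormedAddCommGroup H₁] [InnerProductSpace ℂ H₁] [CompleteSpace H₁]
  [TopologicalSpace.SeparableSpace H₁]
  [NormedAddCommGroup H₂] [InnerProductSpace ℂ H₂] [CompleteSpace H₂]
  [TopologicalSpace.SeparableSpace H₂]
  [NormedAddCommGroup H] [InnerProductSpace ℂ H] [CompleteSpace H]
  [TopologicalSpace.SeparableSpace H]


section AuxPT

open scoped ENNReal NNReal

variable {H₁ H₂ H : Type*}
  [NormedAddCommGroup H₁] [InnerProductSpace ℂ H₁] [CompleteSpace H₁]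
  [NormedAddCommGroup H₂] [InnerProductSpace ℂ H₂] [CompleteSpace H₂]
  [NormedAddCommGroup H] [InnerProductSpace ℂ H]

lemma aux_sum_le_traceNorm (F : H →L[ℂ] H) {ι : Type*} [Fintype ι]
    {x y : ι → H} (hx : Orthonormal ℂ x) (hy : Orthonormal ℂ y) :
    ∑ i, (‖⟪F (x i), y i⟫‖₊ : ℝ≥0∞) ≤ traceNorm F := by
  classical
  set e := (Fintype.equivFin ι).symm with he
  have hs : ∑ i, (‖⟪F (x i), y i⟫‖₊ : ℝ≥0∞)
      = ∑ j, (‖⟪F ((x ∘ e) j), (y ∘ e) j⟫‖₊ : ℝ≥0∞) :=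
    (Equiv.sum_comp e fun i => (‖⟪F (x i), y i⟫‖₊ : ℝ≥0∞)).symm
  rw [hs, traceNorm]
  exact le_iSup_of_le (Fintype.card ι) <| le_iSup_of_le (x ∘ e) <|
    le_iSup_of_le (hx.comp e e.injective) <| le_iSup_of_le (y ∘ e) <|
    le_iSup_of_le (hy.comp e e.injective) le_rfl

lemma aux_tp_zero_left {tp : H₁ → H₂ → H} (htp : IsHilbertTensor tp) (y : H₂) :
    tp 0 y = 0 := by
  simpa using htp.smul_left 0 0 y

lemma aux_orthonormal_tp {tp : H₁ → H₂ → H} (htp : IsHilbertTensor tp)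
    {ι κ : Type*} {a : ι → H₁} {b : κ → H₂}
    (ha : Orthonormal ℂ a) (hb : Orthonormal ℂ b) :
    Orthonormal ℂ (fun p : ι × κ => tp (a p.1) (b p.2)) := by
  classical
  rw [orthonormal_iff_ite] at ha hb ⊢
  intro p q
  rw [htp.inner_tp, ha p.1 q.1, hb p.2 q.2]
  by_cases h1 : p.1 = q.1 <;> by_cases h2 : p.2 = q.2 <;>
    simp [h1, h2, Prod.ext_iff]

lemma aux_double_sum_le {tp : H₁ → H₂ → H} (htp : IsHilbertTensor tp)
    (F : H →L[ℂ] H) {n : ℕ} {x y : Fin n → H₁}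
    (hx : Orthonormal ℂ x) (hy : Orthonormal ℂ y) :
    ∑ i, ∑' j : hIndex H₂,
        (‖⟪tp (y i) (hBasis H₂ j), F (tp (x i) (hBasis H₂ j))⟫‖₊ : ℝ≥0∞)
      ≤ traceNorm F := by
  classical
  have hflip : ∀ u v : H, (‖⟪u, F v⟫‖₊ : ℝ≥0∞) = (‖⟪F v, u⟫‖₊ : ℝ≥0∞) := by
    intro u v
    rw [← inner_conj_symm, RCLike.nnnorm_conj]
  calc ∑ i, ∑' j : hIndex H₂,
        (‖⟪tp (y i) (hBasis H₂ j), F (tp (x i) (hBasis H₂ j))⟫‖₊ : ℝ≥0∞)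
      = ∑' i : Fin n, ∑' j : hIndex H₂,
          (‖⟪F (tp (x i) (hBasis H₂ j)), tp (y i) (hBasis H₂ j)⟫‖₊ : ℝ≥0∞) := by
        rw [tsum_fintype]
        exact Finset.sum_congr rfl fun i _ => tsum_congr fun j => hflip _ _
    _ = ∑' p : Fin n × hIndex H₂,
          (‖⟪F (tp (x p.1) (hBasis H₂ p.2)), tp (y p.1) (hBasis H₂ p.2)⟫‖₊ : ℝ≥0∞) :=
        ENNReal.tsum_prod.symm
    _ ≤ traceNorm F := by
        rw [ENNReal.tsum_eq_iSup_sum]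
        refine iSup_le fun s => ?_
        rw [← Finset.sum_coe_sort]
        exact aux_sum_le_traceNorm F
          ((aux_orthonormal_tp htp hx (hBasis H₂).orthonormal).comp _ Subtype.val_injective)
          ((aux_orthonormal_tp htp hy (hBasis H₂).orthonormal).comp _ Subtype.val_injective)

lemma aux_tsum_le_unit {tp : H₁ → H₂ → H} (htp : IsHilbertTensor tp)
    (F : H →L[ℂ] H) {x y : H₁} (hx : ‖x‖ = 1) (hy : ‖y‖ = 1) :
    ∑' j : hIndex H₂, (‖⟪tp y (hBasis H₂ j), F (tp x (hBasis H₂ j))⟫‖₊ : ℝ≥0∞)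
      ≤ traceNorm F := by
  have hon : ∀ z : H₁, ‖z‖ = 1 → Orthonormal ℂ (fun _ : Fin 1 => z) := by
    intro z hz
    rw [orthonormal_iff_ite]
    intro i j
    simp [Subsingleton.elim i j, inner_self_eq_norm_sq_to_K, hz]
  simpa using aux_double_sum_le htp F (hon x hx) (hon y hy)

lemma aux_term_scale {tp : H₁ → H₂ → H} (htp : IsHilbertTensor tp)
    (F : H →L[ℂ] H) (c d : ℂ) (x y : H₁) (j : hIndex H₂) :
    ‖⟪tp (d • y) (hBasis H₂ j), F (tp (c • x) (hBasis H₂ j))⟫‖₊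
      = ‖c‖₊ * ‖d‖₊ * ‖⟪tp y (hBasis H₂ j), F (tp x (hBasis H₂ j))⟫‖₊ := by
  rw [htp.smul_left, htp.smul_left, map_smul, inner_smul_left, inner_smul_right,
    nnnorm_mul, nnnorm_mul, RCLike.nnnorm_conj]
  ring

lemma aux_cancel {a b : ℝ≥0} (t : ℝ≥0) (ha : a ≠ 0) (hb : b ≠ 0) :
    a * b * (a⁻¹ * b⁻¹ * t) = t := by
  field_simp

lemma aux_tsum_le {tp : H₁ → H₂ → H} (htp : IsHilbertTensor tp)
    (F : H →L[ℂ] H) (x y : H₁) :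
    ∑' j : hIndex H₂, (‖⟪tp y (hBasis H₂ j), F (tp x (hBasis H₂ j))⟫‖₊ : ℝ≥0∞)
      ≤ (‖x‖₊ * ‖y‖₊ : ℝ≥0) * traceNorm F := by
  rcases eq_or_ne x 0 with rfl | hx
  · simp [aux_tp_zero_left htp]
  rcases eq_or_ne y 0 with rfl | hy
  · simp [aux_tp_zero_left htp]
  have hnx : ‖((‖x‖ : ℂ))⁻¹‖₊ = ‖x‖₊⁻¹ := by
    rw [nnnorm_inv, Complex.nnnorm_real, nnnorm_norm]
  have hny : ‖((‖y‖ : ℂ))⁻¹‖₊ = ‖y‖₊⁻¹ := by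
    rw [nnnorm_inv, Complex.nnnorm_real, nnnorm_norm]
  have ha : ‖x‖₊ ≠ 0 := by simpa using hx
  have hb : ‖y‖₊ ≠ 0 := by simpa using hy
  have hterm : ∀ j : hIndex H₂,
      (‖⟪tp y (hBasis H₂ j), F (tp x (hBasis H₂ j))⟫‖₊ : ℝ≥0∞)
        = ((‖x‖₊ * ‖y‖₊ : ℝ≥0) : ℝ≥0∞)
            * (‖⟪tp (((‖y‖ : ℂ))⁻¹ • y) (hBasis H₂ j),
                F (tp (((‖x‖ : ℂ))⁻¹ • x) (hBasis H₂ j))⟫‖₊ : ℝ≥0∞) := by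
    intro j
    rw [aux_term_scale htp F _ _ x y j, hnx, hny, ← ENNReal.coe_mul]
    norm_cast
    exact (aux_cancel _ ha hb).symm
  calc ∑' j : hIndex H₂, (‖⟪tp y (hBasis H₂ j), F (tp x (hBasis H₂ j))⟫‖₊ : ℝ≥0∞)
      = ∑' j : hIndex H₂, ((‖x‖₊ * ‖y‖₊ : ℝ≥0) : ℝ≥0∞)
          * (‖⟪tp (((‖y‖ : ℂ))⁻¹ • y) (hBasis H₂ j),
              F (tp (((‖x‖ : ℂ))⁻¹ • x) (hBasis H₂ j))⟫‖₊ : ℝ≥0∞) :=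
        tsum_congr hterm
    _ = ((‖x‖₊ * ‖y‖₊ : ℝ≥0) : ℝ≥0∞)
          * ∑' j : hIndex H₂, (‖⟪tp (((‖y‖ : ℂ))⁻¹ • y) (hBasis H₂ j),
              F (tp (((‖x‖ : ℂ))⁻¹ • x) (hBasis H₂ j))⟫‖₊ : ℝ≥0∞) :=
        ENNReal.tsum_mul_left
    _ ≤ _ := by
        gcongr
        exact aux_tsum_le_unit htp F (norm_smul_inv_norm hx) (norm_smul_inv_norm hy)

lemma aux_tsum_ne_top {tp : H₁ → H₂ → H} (htp : IsHilbertTensor tp)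
    (F : H →L[ℂ] H) (hF : traceNorm F ≠ ⊤) (x y : H₁) :
    ∑' j : hIndex H₂, (‖⟪tp y (hBasis H₂ j), F (tp x (hBasis H₂ j))⟫‖₊ : ℝ≥0∞) ≠ ⊤ :=
  ne_top_of_le_ne_top (ENNReal.mul_ne_top ENNReal.coe_ne_top hF) (aux_tsum_le htp F x y)

lemma aux_summable_nnnorm {tp : H₁ → H₂ → H} (htp : IsHilbertTensor tp)
    (F : H →L[ℂ] H) (hF : traceNorm F ≠ ⊤) (x y : H₁) :
    Summable fun j : hIndex H₂ => ‖⟪tp y (hBasis H₂ j), F (tp x (hBasis H₂ j))⟫‖₊ :=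
  ENNReal.tsum_coe_ne_top_iff_summable.mp (aux_tsum_ne_top htp F hF x y)

lemma aux_summable_norm {tp : H₁ → H₂ → H} (htp : IsHilbertTensor tp)
    (F : H →L[ℂ] H) (hF : traceNorm F ≠ ⊤) (x y : H₁) :
    Summable fun j : hIndex H₂ => ‖⟪tp y (hBasis H₂ j), F (tp x (hBasis H₂ j))⟫‖ := by
  simpa using NNReal.summable_coe.2 (aux_summable_nnnorm htp F hF x y)

lemma aux_summable {tp : H₁ → H₂ → H} (htp : IsHilbertTensor tp)
    (F : H →L[ℂ] H) (hF : traceNorm F ≠ ⊤) (x y : H₁) :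
    Summable fun j : hIndex H₂ => ⟪tp y (hBasis H₂ j), F (tp x (hBasis H₂ j))⟫ :=
  Summable.of_norm (aux_summable_norm htp F hF x y)

lemma aux_tsum_norm_le {tp : H₁ → H₂ → H} (htp : IsHilbertTensor tp)
    (F : H →L[ℂ] H) (hF : traceNorm F ≠ ⊤) (x y : H₁) :
    ∑' j : hIndex H₂, ‖⟪tp y (hBasis H₂ j), F (tp x (hBasis H₂ j))⟫‖
      ≤ ‖x‖ * ‖y‖ * (traceNorm F).toReal := by
  have key := ENNReal.toReal_mono (ENNReal.mul_ne_top ENNReal.coe_ne_top hF)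
    (aux_tsum_le htp F x y)
  calc ∑' j : hIndex H₂, ‖⟪tp y (hBasis H₂ j), F (tp x (hBasis H₂ j))⟫‖
      = (∑' j : hIndex H₂,
          (‖⟪tp y (hBasis H₂ j), F (tp x (hBasis H₂ j))⟫‖₊ : ℝ≥0∞)).toReal := by
        rw [ENNReal.tsum_toReal_eq fun _ => ENNReal.coe_ne_top]
        simp
    _ ≤ ‖x‖ * ‖y‖ * (traceNorm F).toReal := by
        refine key.trans_eq ?_
        rw [ENNReal.toReal_mul]
        simp [mul_assoc]

lemma aux_exists_partialTrace₂ {tp : H₁ → H₂ → H} (htp : IsHilbertTensor tp)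
    (F : H →L[ℂ] H) (hF : traceNorm F ≠ ⊤) :
    ∃ C : H₁ →L[ℂ] H₁, IsPartialTrace₂ tp F C ∧ traceNorm C ≤ traceNorm F := by
  classical
  set M : ℝ := (traceNorm F).toReal with hM
  set φ : H₁ → H₁ → ℂ := fun x y =>
    ∑' j : hIndex H₂, ⟪tp y (hBasis H₂ j), F (tp x (hBasis H₂ j))⟫ with hφ
  have hφ_bound : ∀ x y, ‖φ x y‖ ≤ M * ‖x‖ * ‖y‖ := by
    intro x y
    calc ‖φ x y‖ ≤ ∑' j : hIndex H₂, ‖⟪tp y (hBasis H₂ j), F (tp x (hBasis H₂ j))⟫‖ :=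
          norm_tsum_le_tsum_norm (aux_summable_norm htp F hF x y)
      _ ≤ ‖x‖ * ‖y‖ * M := aux_tsum_norm_le htp F hF x y
      _ = M * ‖x‖ * ‖y‖ := by ring
  have hφ_addx : ∀ x x' y, φ (x + x') y = φ x y + φ x' y := by
    intro a a' b
    simp only [hφ]
    rw [← Summable.tsum_add (aux_summable htp F hF a b) (aux_summable htp F hF a' b)]
    exact tsum_congr fun j => by rw [htp.add_left, map_add, inner_add_right]
  have hφ_smulx : ∀ (c : ℂ) x y, φ (c • x) y = c * φ x y := by
    intro c a b
    simp only [hφ]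
    rw [← tsum_mul_left]
    exact tsum_congr fun j => by rw [htp.smul_left, map_smul, inner_smul_right]
  have hφ_addy : ∀ x y y', φ x (y + y') = φ x y + φ x y' := by
    intro a b b'
    simp only [hφ]
    rw [← Summable.tsum_add (aux_summable htp F hF a b) (aux_summable htp F hF a b')]
    exact tsum_congr fun j => by rw [htp.add_left, inner_add_left]
  have hφ_smuly : ∀ (c : ℂ) x y, φ x (c • y) = (starRingEnd ℂ) c * φ x y := by
    intro c a b
    simp only [hφ]
    rw [← tsum_mul_left]
    exact tsum_congr fun j => by rw [htp.smul_left, inner_smul_left]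
  have hM0 : 0 ≤ M := ENNReal.toReal_nonneg
  let ψ : H₁ → (H₁ →L[ℂ] ℂ) := fun x =>
    LinearMap.mkContinuous
      { toFun := fun y => (starRingEnd ℂ) (φ x y)
        map_add' := fun y y' => by
          show (starRingEnd ℂ) (φ x (y + y'))
            = (starRingEnd ℂ) (φ x y) + (starRingEnd ℂ) (φ x y')
          rw [hφ_addy, map_add]
        map_smul' := fun c y => by
          show (starRingEnd ℂ) (φ x (c • y)) = (RingHom.id ℂ) c • (starRingEnd ℂ) (φ x y)
          rw [hφ_smuly, map_mul]
          simp [mul_comm]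
        }
      (M * ‖x‖)
      (fun y => by
        show ‖(starRingEnd ℂ) (φ x y)‖ ≤ M * ‖x‖ * ‖y‖
        rw [RCLike.norm_conj]
        exact hφ_bound x y)
  have hψ : ∀ x y, ψ x y = (starRingEnd ℂ) (φ x y) := fun x y => rfl
  let Cfun : H₁ → H₁ := fun x => (InnerProductSpace.toDual ℂ H₁).symm (ψ x)
  have hC : ∀ x y, ⟪y, Cfun x⟫ = φ x y := by
    intro x y
    rw [← inner_conj_symm]
    rw [show (⟪Cfun x, y⟫ : ℂ) = ψ x y from InnerProductSpace.toDual_symm_apply, hψ]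
    simp
  have hC_add : ∀ x x', Cfun (x + x') = Cfun x + Cfun x' := by
    intro x x'
    refine ext_inner_left ℂ fun v => ?_
    rw [hC, hφ_addx, inner_add_right, hC, hC]
  have hC_smul : ∀ (c : ℂ) x, Cfun (c • x) = c • Cfun x := by
    intro c x
    refine ext_inner_left ℂ fun v => ?_
    rw [hC, hφ_smulx, inner_smul_right, hC]
  have hC_norm : ∀ x, ‖Cfun x‖ ≤ M * ‖x‖ := by
    intro x
    rw [show ‖Cfun x‖ = ‖ψ x‖ from LinearIsometryEquiv.norm_map _ _]
    exact LinearMap.mkContinuous_norm_le _ (mul_nonneg hM0 (norm_nonneg x)) _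
  let C : H₁ →L[ℂ] H₁ :=
    LinearMap.mkContinuous
      { toFun := Cfun, map_add' := hC_add, map_smul' := hC_smul } M hC_norm
  have hC' : ∀ x y : H₁, ⟪y, C x⟫ = φ x y := hC
  refine ⟨C, fun x y => hC' x y, ?_⟩
  rw [traceNorm]
  refine iSup_le fun n => iSup_le fun x => iSup_le fun hx =>
    iSup_le fun y => iSup_le fun hy => ?_
  have hterm : ∀ i, (‖⟪C (x i), y i⟫‖₊ : ℝ≥0∞)
      ≤ ∑' j : hIndex H₂,
          (‖⟪tp (y i) (hBasis H₂ j), F (tp (x i) (hBasis H₂ j))⟫‖₊ : ℝ≥0∞) := by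
    intro i
    have h1 : (⟪C (x i), y i⟫ : ℂ) = (starRingEnd ℂ) (φ (x i) (y i)) := by
      rw [← inner_conj_symm, hC']
    rw [h1, RCLike.nnnorm_conj]
    have hsn := aux_summable_nnnorm htp F hF (x i) (y i)
    calc (‖φ (x i) (y i)‖₊ : ℝ≥0∞)
        ≤ ((∑' j : hIndex H₂,
            ‖⟪tp (y i) (hBasis H₂ j), F (tp (x i) (hBasis H₂ j))⟫‖₊ : ℝ≥0) : ℝ≥0∞) :=
          ENNReal.coe_le_coe.2 (nnnorm_tsum_le hsn)
      _ = ∑' j : hIndex H₂,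
            (‖⟪tp (y i) (hBasis H₂ j), F (tp (x i) (hBasis H₂ j))⟫‖₊ : ℝ≥0∞) :=
          ENNReal.coe_tsum hsn
  calc ∑ i, (‖⟪C (x i), y i⟫‖₊ : ℝ≥0∞)
      ≤ ∑ i, ∑' j : hIndex H₂,
          (‖⟪tp (y i) (hBasis H₂ j), F (tp (x i) (hBasis H₂ j))⟫‖₊ : ℝ≥0∞) :=
        Finset.sum_le_sum fun i _ => hterm i
    _ ≤ traceNorm F := aux_double_sum_le htp F hx hy

lemma aux_swap {tp : H₁ → H₂ → H} (htp : IsHilbertTensor tp) :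
    IsHilbertTensor (fun (y : H₂) (x : H₁) => tp x y) := by
  constructor
  · intro x u y v; rw [htp.inner_tp]; ring
  · exact fun x x' y => htp.add_right y x x'
  · exact fun c x y => htp.smul_right c y x
  · exact fun x y y' => htp.add_left y y' x
  · exact fun c x y => htp.smul_left c y x
  · have : {v : H | ∃ x y, v = tp y x} = {v : H | ∃ x y, v = tp x y} := by
      ext v
      exact ⟨fun ⟨a, b, h⟩ => ⟨b, a, h⟩, fun ⟨a, b, h⟩ => ⟨b, a, h⟩⟩
    rw [show {v : H | ∃ (x : H₂) (y : H₁), v = tp y x} = {v : H | ∃ x y, v = tp x y} from this]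
    exact htp.dense_span

end AuxPT

/-- the partial traces of a trace class operator on `H = H₁ ⊗ H₂` exist,
are trace class, and satisfy `‖tr₂ F‖₁ ≤ ‖F‖₁` and `‖tr₁ F‖₁ ≤ ‖F‖₁`. -/
theorem partialTrace_traceNorm_le
    (tp : H₁ → H₂ → H) (htp : IsHilbertTensor tp)
    (F : H →L[ℂ] H) (hF : traceNorm F ≠ ⊤) :
    ∃ (C : H₁ →L[ℂ] H₁) (D : H₂ →L[ℂ] H₂),
      IsPartialTrace₂ tp F C ∧ IsPartialTrace₁ tp F D ∧
      traceNorm C ≠ ⊤ ∧ traceNorm D ≠ ⊤ ∧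
      traceNorm C ≤ traceNorm F ∧ traceNorm D ≤ traceNorm F := by
  obtain ⟨C, hC, hCle⟩ := aux_exists_partialTrace₂ htp F hF
  obtain ⟨D, hD, hDle⟩ := aux_exists_partialTrace₂ (aux_swap htp) F hF
  exact ⟨C, D, hC, fun u v => hD u v,
    ne_top_of_le_ne_top hF hCle, ne_top_of_le_ne_top hF hDle, hCle, hDle⟩
end
end

section
/- Let a, b ∈ H₁ ⊗ H₂. Then the rank-one operator a b* satisfies max(‖tr₂(a b*)‖₁, ‖tr₁(a b*)‖₁) ≤ ‖a‖·‖b‖ = ‖a b*‖₁, and tr(a b*) = tr(tr₂(a b*)) = tr(tr₁(a b*)) = ⟨a, b⟩. -/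
noncomputable section

open Filter Topology

local notation "⟪" x ", " y "⟫" => @inner ℂ _ _ x y

/-- the rank one operator `a b*`, sending `x` to `⟪b, x⟫ • a` (that is, `⟨x, b⟩ a` in the
convention where the inner product is linear in the first argument) -/
def rankOne {H : Type*} [NormedAddCommGroup H] [InnerProductSpace ℂ H] (a b : H) :
    H →L[ℂ] H :=
  (innerSL ℂ b).smulRight a

section Aux

variable {H₁ H₂ H : Type*}
  [NormedAddCommGroup H₁] [InnerProductSpace ℂ H₁] [CompleteSpace H₁]
  [NormedAddCommGroup H₂] [InnerProductSpace ℂ H₂] [CompleteSpace H₂]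
  [NormedAddCommGroup H] [InnerProductSpace ℂ H] [CompleteSpace H]

lemma rankOne_apply {E : Type*} [NormedAddCommGroup E] [InnerProductSpace ℂ E] (a b x : E) :
    rankOne a b x = ⟪b, x⟫ • a := rfl

namespace IsHilbertTensor

variable {tp : H₁ → H₂ → H} (htp : IsHilbertTensor tp)
include htp
set_option linter.unusedSectionVars false

lemma norm_tp (x : H₁) (y : H₂) : ‖tp x y‖ = ‖x‖ * ‖y‖ := by
  have h := htp.inner_tp x x y y
  rw [inner_self_eq_norm_sq_to_K, inner_self_eq_norm_sq_to_K, inner_self_eq_norm_sq_to_K] at h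
  have h2 : (‖tp x y‖ : ℝ) ^ 2 = ‖x‖ ^ 2 * ‖y‖ ^ 2 := by exact_mod_cast h
  nlinarith [norm_nonneg (tp x y), mul_nonneg (norm_nonneg x) (norm_nonneg y)]

/-- `tp x ·` as a continuous linear map -/
def tpR (x : H₁) : H₂ →L[ℂ] H :=
  LinearMap.mkContinuous
    { toFun := fun v => tp x v
      map_add' := fun v w => htp.add_right x v w
      map_smul' := fun c v => htp.smul_right c x v }
    ‖x‖ (fun v => by show ‖tp x v‖ ≤ ‖x‖ * ‖v‖; rw [htp.norm_tp])

@[simp] lemma tpR_apply (x : H₁) (v : H₂) : htp.tpR x v = tp x v := rfl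

/-- `tp · y` as a continuous linear map -/
def tpL (y : H₂) : H₁ →L[ℂ] H :=
  LinearMap.mkContinuous
    { toFun := fun x => tp x y
      map_add' := fun x x' => htp.add_left x x' y
      map_smul' := fun c x => htp.smul_left c x y }
    ‖y‖ (fun x => by show ‖tp x y‖ ≤ ‖y‖ * ‖x‖; rw [htp.norm_tp, mul_comm])

@[simp] lemma tpL_apply (x : H₁) (y : H₂) : htp.tpL y x = tp x y := rfl

lemma orthonormal_tp {ι κ : Type*} {v : ι → H₁} {w : κ → H₂}
    (hv : Orthonormal ℂ v) (hw : Orthonormal ℂ w) :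
    Orthonormal ℂ (fun p : ι × κ => tp (v p.1) (w p.2)) := by
  classical
  rw [orthonormal_iff_ite] at hv hw ⊢
  intro p q
  rw [htp.inner_tp, hv p.1 q.1, hw p.2 q.2]
  by_cases h : p = q
  · simp [h]
  · rcases (not_and_or.mp (fun hh : p.1 = q.1 ∧ p.2 = q.2 => h (Prod.ext hh.1 hh.2))) with h1 | h1 <;>
      simp [h, h1]

/-- the partial contraction `ptv c x ∈ H₂` of `c ∈ H` against `x ∈ H₁`, namely the
vector with `⟪ptv c x, v⟫ = ⟪c, tp x v⟫`. -/
def ptv (c : H) (x : H₁) : H₂ :=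
  (InnerProductSpace.toDual ℂ H₂).symm
    (LinearMap.mkContinuous
      { toFun := fun v => ⟪c, tp x v⟫
        map_add' := fun v w => by
          show ⟪c, tp x (v + w)⟫ = ⟪c, tp x v⟫ + ⟪c, tp x w⟫
          rw [htp.add_right, inner_add_right]
        map_smul' := fun r v => by
          show ⟪c, tp x (r • v)⟫ = r * ⟪c, tp x v⟫
          rw [htp.smul_right, inner_smul_right] }
      (‖c‖ * ‖x‖)
      (fun v => by
        calc ‖⟪c, tp x v⟫‖ ≤ ‖c‖ * ‖tp x v‖ := norm_inner_le_norm _ _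
          _ = ‖c‖ * ‖x‖ * ‖v‖ := by rw [htp.norm_tp]; ring))

lemma inner_ptv (c : H) (x : H₁) (v : H₂) : ⟪htp.ptv c x, v⟫ = ⟪c, tp x v⟫ :=
  InnerProductSpace.toDual_symm_apply

lemma norm_ptv_le (c : H) (x : H₁) : ‖htp.ptv c x‖ ≤ ‖c‖ * ‖x‖ := by
  rw [ptv, LinearIsometryEquiv.norm_map]
  exact LinearMap.mkContinuous_norm_le _ (mul_nonneg (norm_nonneg c) (norm_nonneg x)) _

lemma ptv_add (c : H) (x x' : H₁) : htp.ptv c (x + x') = htp.ptv c x + htp.ptv c x' := by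
  refine ext_inner_right ℂ fun v => ?_
  rw [inner_add_left, inner_ptv, inner_ptv, inner_ptv, htp.add_left, inner_add_right]

lemma ptv_smul (c : H) (r : ℂ) (x : H₁) :
    htp.ptv c (r • x) = (starRingEnd ℂ r) • htp.ptv c x := by
  refine ext_inner_right ℂ fun v => ?_
  rw [inner_smul_left, inner_ptv, inner_ptv, htp.smul_left, inner_smul_right]
  simp

end IsHilbertTensor
end Aux
section Aux2

variable {H₁ H₂ H : Type*}
  [NormedAddCommGroup H₁] [InnerProductSpace ℂ H₁] [CompleteSpace H₁]
  [NormedAddCommGroup H₂] [InnerProductSpace ℂ H₂] [CompleteSpace H₂]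
  [NormedAddCommGroup H] [InnerProductSpace ℂ H] [CompleteSpace H]

namespace IsHilbertTensor

variable {tp : H₁ → H₂ → H} (htp : IsHilbertTensor tp)
include htp
set_option linter.unusedSectionVars false

/-- auxiliary: `ptC a b x ∈ H₁`, the vector with `⟪ptC a b x, y⟫ = ⟪ptv a y, ptv b x⟫`. -/
def ptC (a b : H) (x : H₁) : H₁ :=
  (InnerProductSpace.toDual ℂ H₁).symm
    (LinearMap.mkContinuous
      { toFun := fun y => ⟪htp.ptv a y, htp.ptv b x⟫
        map_add' := fun y y' => by
          show ⟪htp.ptv a (y + y'), htp.ptv b x⟫ = _ + _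
          rw [htp.ptv_add, inner_add_left]
        map_smul' := fun r y => by
          show ⟪htp.ptv a (r • y), htp.ptv b x⟫ = r * ⟪htp.ptv a y, htp.ptv b x⟫
          rw [htp.ptv_smul, inner_smul_left]
          simp }
      (‖a‖ * (‖b‖ * ‖x‖))
      (fun y => by
        calc ‖⟪htp.ptv a y, htp.ptv b x⟫‖ ≤ ‖htp.ptv a y‖ * ‖htp.ptv b x‖ :=
              norm_inner_le_norm _ _
          _ ≤ (‖a‖ * ‖y‖) * (‖b‖ * ‖x‖) :=
              mul_le_mul (htp.norm_ptv_le a y) (htp.norm_ptv_le b x) (norm_nonneg _)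
                (mul_nonneg (norm_nonneg _) (norm_nonneg _))
          _ = ‖a‖ * (‖b‖ * ‖x‖) * ‖y‖ := by ring))

lemma inner_ptC (a b : H) (x y : H₁) : ⟪htp.ptC a b x, y⟫ = ⟪htp.ptv a y, htp.ptv b x⟫ :=
  InnerProductSpace.toDual_symm_apply

lemma norm_ptC_le (a b : H) (x : H₁) : ‖htp.ptC a b x‖ ≤ ‖a‖ * ‖b‖ * ‖x‖ := by
  rw [ptC, LinearIsometryEquiv.norm_map]
  have := LinearMap.mkContinuous_norm_le
    (𝕜 := ℂ)
    ({ toFun := fun y => ⟪htp.ptv a y, htp.ptv b x⟫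
       map_add' := fun y y' => by
         show ⟪htp.ptv a (y + y'), htp.ptv b x⟫ = _ + _
         rw [htp.ptv_add, inner_add_left]
       map_smul' := fun r y => by
         show ⟪htp.ptv a (r • y), htp.ptv b x⟫ = r * ⟪htp.ptv a y, htp.ptv b x⟫
         rw [htp.ptv_smul, inner_smul_left]
         simp } : H₁ →ₗ[ℂ] ℂ)
    (mul_nonneg (norm_nonneg a) (mul_nonneg (norm_nonneg b) (norm_nonneg x)))
    (fun y => by
        calc ‖⟪htp.ptv a y, htp.ptv b x⟫‖ ≤ ‖htp.ptv a y‖ * ‖htp.ptv b x‖ :=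
              norm_inner_le_norm _ _
          _ ≤ (‖a‖ * ‖y‖) * (‖b‖ * ‖x‖) :=
              mul_le_mul (htp.norm_ptv_le a y) (htp.norm_ptv_le b x) (norm_nonneg _)
                (mul_nonneg (norm_nonneg _) (norm_nonneg _))
          _ = ‖a‖ * (‖b‖ * ‖x‖) * ‖y‖ := by ring)
  calc _ ≤ ‖a‖ * (‖b‖ * ‖x‖) := this
    _ = ‖a‖ * ‖b‖ * ‖x‖ := by ring

/-- the partial trace over `H₂` of `rankOne a b`, as a continuous linear map -/
def ptCL (a b : H) : H₁ →L[ℂ] H₁ :=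
  LinearMap.mkContinuous
    { toFun := htp.ptC a b
      map_add' := fun x x' => by
        refine ext_inner_right ℂ fun y => ?_
        rw [inner_add_left, htp.inner_ptC, htp.inner_ptC, htp.inner_ptC, htp.ptv_add,
          inner_add_right]
      map_smul' := fun r x => by
        refine ext_inner_right ℂ fun y => ?_
        rw [htp.inner_ptC, htp.ptv_smul, inner_smul_right, inner_smul_left, htp.inner_ptC]
        rfl }
    (‖a‖ * ‖b‖)
    (fun x => by
      show ‖htp.ptC a b x‖ ≤ ‖a‖ * ‖b‖ * ‖x‖
      exact htp.norm_ptC_le a b x)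

lemma ptCL_apply (a b : H) (x : H₁) : htp.ptCL a b x = htp.ptC a b x := rfl

lemma isPartialTrace₂_ptCL (a b : H) :
    IsPartialTrace₂ tp (rankOne a b) (htp.ptCL a b) := by
  intro x y
  have key : ∀ j : hIndex H₂,
      ⟪tp y (hBasis H₂ j), rankOne a b (tp x (hBasis H₂ j))⟫
        = ⟪htp.ptv b x, (hBasis H₂ j : H₂)⟫ * ⟪(hBasis H₂ j : H₂), htp.ptv a y⟫ := by
    intro j
    set u : H₂ := (hBasis H₂ j : H₂) with hu
    rw [rankOne_apply, inner_smul_right, htp.inner_ptv]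
    congr 1
    rw [← inner_conj_symm (𝕜 := ℂ) (tp y u) a, ← inner_conj_symm (𝕜 := ℂ) u (htp.ptv a y), htp.inner_ptv]
  calc ⟪y, htp.ptCL a b x⟫ = (starRingEnd ℂ) ⟪htp.ptC a b x, y⟫ := by
        rw [inner_conj_symm]; rfl
    _ = (starRingEnd ℂ) ⟪htp.ptv a y, htp.ptv b x⟫ := by rw [htp.inner_ptC]
    _ = ⟪htp.ptv b x, htp.ptv a y⟫ := by rw [inner_conj_symm]
    _ = ∑' j : hIndex H₂, ⟪htp.ptv b x, (hBasis H₂ j : H₂)⟫ * ⟪(hBasis H₂ j : H₂), htp.ptv a y⟫ :=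
        ((hBasis H₂).tsum_inner_mul_inner _ _).symm
    _ = _ := by rw [tsum_congr key]

end IsHilbertTensor
end Aux2
section Aux3

variable {E : Type*} [NormedAddCommGroup E] [InnerProductSpace ℂ E] [CompleteSpace E]

lemma hasSum_norm_sq_inner {ι : Type*} (e : HilbertBasis ι ℂ E) (u : E) :
    HasSum (fun j => ‖⟪(e j : E), u⟫‖ ^ 2) (‖u‖ ^ 2) := by
  have h := (e.hasSum_inner_mul_inner u u).mapL Complex.reCLM
  have hz : ∀ z : ℂ, Complex.reCLM ((starRingEnd ℂ) z * z) = ‖z‖ ^ 2 := fun z => by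
    rw [← Complex.normSq_eq_conj_mul_self]
    simp only [Complex.reCLM_apply, Complex.ofReal_re]
    rw [Complex.normSq_eq_norm_sq]
  have h1 : ∀ j, Complex.reCLM (⟪u, (e j : E)⟫ * ⟪(e j : E), u⟫) = ‖⟪(e j : E), u⟫‖ ^ 2 := by
    intro j
    rw [← inner_conj_symm (𝕜 := ℂ) u (e j : E)]
    exact hz _
  have h2 : Complex.reCLM ⟪u, u⟫ = ‖u‖ ^ 2 := by
    rw [inner_self_eq_norm_sq_to_K]
    simp only [Complex.reCLM_apply]
    norm_cast
  rw [h2] at h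
  exact h.congr_fun fun j => (h1 j).symm

lemma cs_sum {n : ℕ} (f g : Fin n → ℝ) (hf : ∀ i, 0 ≤ f i) (hg : ∀ i, 0 ≤ g i)
    {A B : ℝ} (hA : 0 ≤ A) (hB : 0 ≤ B)
    (h1 : ∑ i, f i ^ 2 ≤ A ^ 2) (h2 : ∑ i, g i ^ 2 ≤ B ^ 2) :
    ∑ i, f i * g i ≤ A * B := by
  have h := Finset.sum_mul_sq_le_sq_mul_sq Finset.univ f g
  have hs : 0 ≤ ∑ i, f i * g i := Finset.sum_nonneg fun i _ => mul_nonneg (hf i) (hg i)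
  have hgg : 0 ≤ ∑ i, g i ^ 2 := Finset.sum_nonneg fun i _ => sq_nonneg _
  have key : (∑ i, f i * g i) ^ 2 ≤ (A * B) ^ 2 := by
    calc (∑ i, f i * g i) ^ 2 ≤ (∑ i, f i ^ 2) * ∑ i, g i ^ 2 := h
      _ ≤ A ^ 2 * B ^ 2 := mul_le_mul h1 h2 hgg (sq_nonneg A)
      _ = (A * B) ^ 2 := by ring
  nlinarith [mul_nonneg hA hB]

lemma traceNorm_le_of_forall {L : E →L[ℂ] E} {M : ℝ}
    (h : ∀ (n : ℕ) (x : Fin n → E), Orthonormal ℂ x → ∀ (y : Fin n → E), Orthonormal ℂ y →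
      ∑ i, ‖⟪L (x i), y i⟫‖ ≤ M) :
    traceNorm L ≤ ENNReal.ofReal M := by
  refine iSup_le fun n => iSup_le fun x => iSup_le fun hx => iSup_le fun y => iSup_le fun hy => ?_
  have e1 : (∑ i, (‖⟪L (x i), y i⟫‖₊ : ENNReal)) = ENNReal.ofReal (∑ i, ‖⟪L (x i), y i⟫‖) := by
    rw [ENNReal.ofReal_sum_of_nonneg fun i _ => norm_nonneg _]
    exact Finset.sum_congr rfl fun i _ => ((ofReal_norm _).trans (enorm_eq_nnnorm _)).symm
  rw [e1]
  exact ENNReal.ofReal_le_ofReal (h n x hx y hy)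

end Aux3
section Aux4
set_option linter.unusedSectionVars false

variable {H₁ H₂ H : Type*}
  [NormedAddCommGroup H₁] [InnerProductSpace ℂ H₁] [CompleteSpace H₁]
  [NormedAddCommGroup H₂] [InnerProductSpace ℂ H₂] [CompleteSpace H₂]
  [NormedAddCommGroup H] [InnerProductSpace ℂ H] [CompleteSpace H]

namespace IsHilbertTensor

variable {tp : H₁ → H₂ → H} (htp : IsHilbertTensor tp)
include htp

lemma hasSum_ptv_fiber (c : H) (x : H₁) :
    HasSum (fun j : hIndex H₂ => ‖⟪tp x (hBasis H₂ j : H₂), c⟫‖ ^ 2) (‖htp.ptv c x‖ ^ 2) := by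
  refine (hasSum_norm_sq_inner (hBasis H₂) (htp.ptv c x)).congr_fun fun j => ?_
  have h1 : ⟪(hBasis H₂ j : H₂), htp.ptv c x⟫ = (starRingEnd ℂ) ⟪c, tp x (hBasis H₂ j : H₂)⟫ := by
    rw [← inner_conj_symm (𝕜 := ℂ) (hBasis H₂ j : H₂) (htp.ptv c x), htp.inner_ptv]
  rw [h1, RCLike.norm_conj, norm_inner_symm]

lemma bessel_ptv (c : H) {n : ℕ} {v : Fin n → H₁} (hv : Orthonormal ℂ v) :
    ∑ i, ‖htp.ptv c (v i)‖ ^ 2 ≤ ‖c‖ ^ 2 := by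
  classical
  have hw : Orthonormal ℂ (fun p : Fin n × hIndex H₂ => tp (v p.1) (hBasis H₂ p.2)) :=
    htp.orthonormal_tp hv (hBasis H₂).orthonormal
  set F : Fin n × hIndex H₂ → ℝ := fun p => ‖⟪tp (v p.1) (hBasis H₂ p.2 : H₂), c⟫‖ ^ 2 with hF
  have hfiber : ∀ i : Fin n, HasSum (fun j => F (i, j)) (‖htp.ptv c (v i)‖ ^ 2) :=
    fun i => htp.hasSum_ptv_fiber c (v i)
  have hsummable : Summable F := by
    rw [summable_prod_of_nonneg (fun p => sq_nonneg _)]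
    exact ⟨fun i => (hfiber i).summable,
      Summable.of_finite⟩
  calc ∑ i, ‖htp.ptv c (v i)‖ ^ 2
      = ∑ i : Fin n, ∑' j, F (i, j) :=
        Finset.sum_congr rfl fun i _ => ((hfiber i).tsum_eq).symm
    _ = ∑' i, ∑' j, F (i, j) := (tsum_fintype _).symm
    _ = ∑' p, F p := (Summable.tsum_prod' hsummable fun i => (hfiber i).summable).symm
    _ ≤ ‖c‖ ^ 2 := hw.tsum_inner_products_le c

lemma traceNorm_ptCL_le (a b : H) :
    traceNorm (htp.ptCL a b) ≤ ENNReal.ofReal (‖a‖ * ‖b‖) := by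
  refine traceNorm_le_of_forall fun n x hx y hy => ?_
  have hterm : ∀ i, ‖⟪htp.ptCL a b (x i), y i⟫‖ ≤ ‖htp.ptv a (y i)‖ * ‖htp.ptv b (x i)‖ := by
    intro i
    rw [htp.ptCL_apply, htp.inner_ptC]
    exact norm_inner_le_norm _ _
  calc ∑ i, ‖⟪htp.ptCL a b (x i), y i⟫‖
      ≤ ∑ i, ‖htp.ptv a (y i)‖ * ‖htp.ptv b (x i)‖ :=
        Finset.sum_le_sum fun i _ => hterm i
    _ ≤ ‖a‖ * ‖b‖ :=
        cs_sum _ _ (fun i => norm_nonneg _) (fun i => norm_nonneg _)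
          (norm_nonneg a) (norm_nonneg b) (htp.bessel_ptv a hy) (htp.bessel_ptv b hx)

end IsHilbertTensor
end Aux4
section Aux5
set_option linter.unusedSectionVars false
set_option maxHeartbeats 1000000

variable {H₁ H₂ H : Type*}
  [NormedAddCommGroup H₁] [InnerProductSpace ℂ H₁] [CompleteSpace H₁]
  [NormedAddCommGroup H₂] [InnerProductSpace ℂ H₂] [CompleteSpace H₂]
  [NormedAddCommGroup H] [InnerProductSpace ℂ H] [CompleteSpace H]

namespace IsHilbertTensor

variable {tp : H₁ → H₂ → H} (htp : IsHilbertTensor tp)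
include htp

lemma exists_tensor_basis :
    ∃ w : HilbertBasis (hIndex H₁ × hIndex H₂) ℂ H,
      ∀ p : hIndex H₁ × hIndex H₂,
        (w p : H) = tp (hBasis H₁ p.1 : H₁) (hBasis H₂ p.2 : H₂) := by
  classical
  have hon : Orthonormal ℂ
      (fun p : hIndex H₁ × hIndex H₂ => tp (hBasis H₁ p.1 : H₁) (hBasis H₂ p.2 : H₂)) :=
    htp.orthonormal_tp (hBasis H₁).orthonormal (hBasis H₂).orthonormal
  set v : hIndex H₁ × hIndex H₂ → H :=
    fun p => tp (hBasis H₁ p.1 : H₁) (hBasis H₂ p.2 : H₂) with hv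
  set S := (Submodule.span ℂ (Set.range v)).topologicalClosure with hS
  have hSclosed : IsClosed (S : Set H) := Submodule.isClosed_topologicalClosure _
  have stepA : ∀ (i : hIndex H₁) (y : H₂), tp (hBasis H₁ i : H₁) y ∈ S := by
    intro i y
    set T := htp.tpR (hBasis H₁ i : H₁) with hT
    have h1 : Submodule.span ℂ (Set.range (hBasis H₂ : hIndex H₂ → H₂))
        ≤ S.comap (T : H₂ →ₗ[ℂ] H) := by
      rw [Submodule.span_le]
      rintro _ ⟨j, rfl⟩
      show T (hBasis H₂ j) ∈ S
      rw [hT, htp.tpR_apply]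
      exact Submodule.le_topologicalClosure _ (Submodule.subset_span ⟨(i, j), rfl⟩)
    have h2 : closure ((Submodule.span ℂ (Set.range (hBasis H₂ : hIndex H₂ → H₂))) : Set H₂)
        ⊆ (S.comap (T : H₂ →ₗ[ℂ] H) : Set H₂) :=
      closure_minimal h1 (hSclosed.preimage T.continuous)
    have h3 : y ∈ closure ((Submodule.span ℂ (Set.range (hBasis H₂ : hIndex H₂ → H₂))) : Set H₂) := by
      have hd := (hBasis H₂).dense_span
      have : y ∈ ((Submodule.span ℂ (Set.range (hBasis H₂ : hIndex H₂ → H₂))).topologicalClosure :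
          Set H₂) := by rw [hd]; trivial
      exact this
    have := h2 h3
    rw [SetLike.mem_coe, Submodule.mem_comap] at this
    exact this
  have stepB : ∀ (x : H₁) (y : H₂), tp x y ∈ S := by
    intro x y
    set T := htp.tpL y with hT
    have h1 : Submodule.span ℂ (Set.range (hBasis H₁ : hIndex H₁ → H₁))
        ≤ S.comap (T : H₁ →ₗ[ℂ] H) := by
      rw [Submodule.span_le]
      rintro _ ⟨i, rfl⟩
      show T (hBasis H₁ i) ∈ S
      rw [hT, htp.tpL_apply]
      exact stepA i y
    have h2 : closure ((Submodule.span ℂ (Set.range (hBasis H₁ : hIndex H₁ → H₁))) : Set H₁)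
        ⊆ (S.comap (T : H₁ →ₗ[ℂ] H) : Set H₁) :=
      closure_minimal h1 (hSclosed.preimage T.continuous)
    have h3 : x ∈ closure ((Submodule.span ℂ (Set.range (hBasis H₁ : hIndex H₁ → H₁))) : Set H₁) := by
      have hd := (hBasis H₁).dense_span
      have : x ∈ ((Submodule.span ℂ (Set.range (hBasis H₁ : hIndex H₁ → H₁))).topologicalClosure :
          Set H₁) := by rw [hd]; trivial
      exact this
    have := h2 h3
    rw [SetLike.mem_coe, Submodule.mem_comap] at this
    exact this
  have hsp : ⊤ ≤ S := by
    intro z _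
    have hle : Submodule.span ℂ {v : H | ∃ x y, v = tp x y} ≤ S := by
      rw [Submodule.span_le]
      rintro _ ⟨x, y, rfl⟩
      exact stepB x y
    exact closure_minimal (fun u hu => hle hu) hSclosed (htp.dense_span z)
  exact ⟨HilbertBasis.mk hon hsp, fun p => by rw [HilbertBasis.coe_mk]⟩

lemma opTrace_ptCL (a b : H) : opTrace (htp.ptCL a b) = ⟪b, a⟫ := by
  obtain ⟨w, hw⟩ := htp.exists_tensor_basis
  set G : hIndex H₁ × hIndex H₂ → ℂ := fun p => ⟪b, (w p : H)⟫ * ⟪(w p : H), a⟫ with hG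
  have hsum : Summable G := w.summable_inner_mul_inner b a
  have htot : ∑' p, G p = ⟪b, a⟫ := w.tsum_inner_mul_inner b a
  have hterm : ∀ i : hIndex H₁,
      ⟪(hBasis H₁ i : H₁), htp.ptCL a b (hBasis H₁ i)⟫ = ∑' j, G (i, j) := by
    intro i
    set f : H₁ := (hBasis H₁ i : H₁) with hf
    have h1 : ⟪f, htp.ptCL a b f⟫ = ⟪htp.ptv b f, htp.ptv a f⟫ := by
      calc ⟪f, htp.ptCL a b f⟫ = (starRingEnd ℂ) ⟪htp.ptCL a b f, f⟫ := (inner_conj_symm _ _).symm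
        _ = (starRingEnd ℂ) ⟪htp.ptv a f, htp.ptv b f⟫ := by rw [htp.ptCL_apply, htp.inner_ptC]
        _ = ⟪htp.ptv b f, htp.ptv a f⟫ := inner_conj_symm _ _
    have h2 : ⟪htp.ptv b f, htp.ptv a f⟫
        = ∑' j, ⟪htp.ptv b f, (hBasis H₂ j : H₂)⟫ * ⟪(hBasis H₂ j : H₂), htp.ptv a f⟫ :=
      ((hBasis H₂).tsum_inner_mul_inner _ _).symm
    have h3 : ∀ j, ⟪htp.ptv b f, (hBasis H₂ j : H₂)⟫ * ⟪(hBasis H₂ j : H₂), htp.ptv a f⟫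
        = G (i, j) := by
      intro j
      have hwp := hw (i, j)
      simp only [] at hwp
      rw [hG]
      dsimp only
      rw [hwp]
      congr 1
      · exact htp.inner_ptv b f _
      · rw [← inner_conj_symm (𝕜 := ℂ) (hBasis H₂ j : H₂) (htp.ptv a f), htp.inner_ptv]
        exact inner_conj_symm _ _
    rw [h1, h2, tsum_congr h3]
  calc opTrace (htp.ptCL a b) = ∑' i, ∑' j, G (i, j) := by rw [opTrace]; exact tsum_congr hterm
    _ = ∑' p, G p := (Summable.tsum_prod' hsum hsum.prod_factor).symm
    _ = ⟪b, a⟫ := htot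

end IsHilbertTensor
end Aux5
section Aux6
set_option linter.unusedSectionVars false

variable {E : Type*} [NormedAddCommGroup E] [InnerProductSpace ℂ E] [CompleteSpace E]

lemma opTrace_rankOne' (a b : E) : opTrace (rankOne a b) = ⟪b, a⟫ := by
  rw [opTrace]
  have h : ∀ i : hIndex E, ⟪(hBasis E i : E), rankOne a b (hBasis E i)⟫
      = ⟪b, (hBasis E i : E)⟫ * ⟪(hBasis E i : E), a⟫ := by
    intro i
    rw [rankOne_apply, inner_smul_right]
  rw [tsum_congr h, (hBasis E).tsum_inner_mul_inner b a]

lemma traceNorm_rankOne' (a b : E) :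
    traceNorm (rankOne a b) = ENNReal.ofReal (‖a‖ * ‖b‖) := by
  have upper : traceNorm (rankOne a b) ≤ ENNReal.ofReal (‖a‖ * ‖b‖) := by
    refine traceNorm_le_of_forall fun n x hx y hy => ?_
    have hterm : ∀ i, ‖⟪rankOne a b (x i), y i⟫‖ = ‖⟪x i, b⟫‖ * ‖⟪y i, a⟫‖ := by
      intro i
      rw [rankOne_apply, inner_smul_left, norm_mul, RCLike.norm_conj,
        norm_inner_symm b (x i), norm_inner_symm a (y i)]
    calc ∑ i, ‖⟪rankOne a b (x i), y i⟫‖ = ∑ i, ‖⟪x i, b⟫‖ * ‖⟪y i, a⟫‖ :=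
          Finset.sum_congr rfl fun i _ => hterm i
      _ ≤ ‖b‖ * ‖a‖ :=
          cs_sum _ _ (fun i => norm_nonneg _) (fun i => norm_nonneg _)
            (norm_nonneg b) (norm_nonneg a)
            (hx.sum_inner_products_le b) (hy.sum_inner_products_le a)
      _ = ‖a‖ * ‖b‖ := mul_comm _ _
  refine le_antisymm upper ?_
  by_cases ha : a = 0
  · simp [ha]
  by_cases hb : b = 0
  · simp [hb]
  have hna : ‖a‖ ≠ 0 := norm_ne_zero_iff.mpr ha
  have hnb : ‖b‖ ≠ 0 := norm_ne_zero_iff.mpr hb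
  have hca : (‖a‖ : ℂ) ≠ 0 := by exact_mod_cast hna
  have hcb : (‖b‖ : ℂ) ≠ 0 := by exact_mod_cast hnb
  set X : Fin 1 → E := fun _ => ((‖b‖ : ℂ))⁻¹ • b with hX'
  set Y : Fin 1 → E := fun _ => ((‖a‖ : ℂ))⁻¹ • a with hY'
  have hX : Orthonormal ℂ X := by
    rw [orthonormal_iff_ite]
    intro i j
    have h1 : ‖((‖b‖ : ℂ))⁻¹ • b‖ = 1 := by
      rw [norm_smul, norm_inv, Complex.norm_real, Real.norm_of_nonneg (norm_nonneg b),
        inv_mul_cancel₀ hnb]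
    rw [Subsingleton.elim i j, if_pos rfl, hX']
    simp only [inner_self_eq_norm_sq_to_K, h1]
    norm_num
  have hY : Orthonormal ℂ Y := by
    rw [orthonormal_iff_ite]
    intro i j
    have h1 : ‖((‖a‖ : ℂ))⁻¹ • a‖ = 1 := by
      rw [norm_smul, norm_inv, Complex.norm_real, Real.norm_of_nonneg (norm_nonneg a),
        inv_mul_cancel₀ hna]
    rw [Subsingleton.elim i j, if_pos rfl, hY']
    simp only [inner_self_eq_norm_sq_to_K, h1]
    norm_num
  have hval : ⟪rankOne a b (X 0), Y 0⟫ = ((‖a‖ * ‖b‖ : ℝ) : ℂ) := by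
    rw [hX', hY', rankOne_apply]
    simp only [inner_smul_left, inner_smul_right, inner_self_eq_norm_sq_to_K, map_inv₀,
      Complex.conj_ofReal, map_mul, map_pow, RCLike.conj_ofReal, Complex.ofReal_mul]
    field_simp [hca, hcb]
    exact mul_comm _ _
  have hsum : ENNReal.ofReal (‖a‖ * ‖b‖)
      = ∑ i : Fin 1, (‖⟪rankOne a b (X i), Y i⟫‖₊ : ENNReal) := by
    rw [Fin.sum_univ_one, hval, ← enorm_eq_nnnorm, ← ofReal_norm, Complex.norm_real,
      Real.norm_of_nonneg (by positivity)]
  rw [hsum, traceNorm]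
  exact le_iSup_of_le 1 (le_iSup_of_le X (le_iSup_of_le hX (le_iSup_of_le Y
    (le_iSup_of_le hY le_rfl))))

end Aux6
section Aux7
set_option linter.unusedSectionVars false

variable {H₁ H₂ H : Type*}
  [NormedAddCommGroup H₁] [InnerProductSpace ℂ H₁]
  [NormedAddCommGroup H₂] [InnerProductSpace ℂ H₂]
  [NormedAddCommGroup H] [InnerProductSpace ℂ H]

lemma IsHilbertTensor.flip {tp : H₁ → H₂ → H} (htp : IsHilbertTensor tp) :
    IsHilbertTensor (fun (y : H₂) (x : H₁) => tp x y) where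
  inner_tp := fun y v x u => by rw [htp.inner_tp, mul_comm]
  add_left := fun y y' x => htp.add_right x y y'
  smul_left := fun c y x => htp.smul_right c x y
  add_right := fun y x x' => htp.add_left x x' y
  smul_right := fun c y x => htp.smul_left c x y
  dense_span := by
    have hset : {v : H | ∃ y x, v = tp x y} = {v : H | ∃ x y, v = tp x y} := by
      ext w
      constructor
      · rintro ⟨y, x, rfl⟩; exact ⟨x, y, rfl⟩
      · rintro ⟨x, y, rfl⟩; exact ⟨y, x, rfl⟩
    rw [hset]
    exact htp.dense_span

end Aux7
variable {H₁ H₂ H : Type*}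
  [NormedAddCommGroup H₁] [InnerProductSpace ℂ H₁] [CompleteSpace H₁]
  [TopologicalSpace.SeparableSpace H₁]
  [NormedAddCommGroup H₂] [InnerProductSpace ℂ H₂] [CompleteSpace H₂]
  [TopologicalSpace.SeparableSpace H₂]
  [NormedAddCommGroup H] [InnerProductSpace ℂ H] [CompleteSpace H]
  [TopologicalSpace.SeparableSpace H]

/-- for `a, b ∈ H₁ ⊗ H₂`, the rank one operator `a b*` satisfies
`max(‖tr₂(ab*)‖₁, ‖tr₁(ab*)‖₁) ≤ ‖a‖ ‖b‖ = ‖ab*‖₁` and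
`tr(ab*) = tr(tr₂(ab*)) = tr(tr₁(ab*)) = ⟨a, b⟩`. -/
theorem partialTrace_rankOne
    (tp : H₁ → H₂ → H) (htp : IsHilbertTensor tp) (a b : H) :
    ∃ (C : H₁ →L[ℂ] H₁) (D : H₂ →L[ℂ] H₂),
      IsPartialTrace₂ tp (rankOne a b) C ∧ IsPartialTrace₁ tp (rankOne a b) D ∧
      traceNorm (rankOne a b) = ENNReal.ofReal (‖a‖ * ‖b‖) ∧
      traceNorm C ≤ ENNReal.ofReal (‖a‖ * ‖b‖) ∧
      traceNorm D ≤ ENNReal.ofReal (‖a‖ * ‖b‖) ∧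
      opTrace (rankOne a b) = ⟪b, a⟫ ∧ opTrace C = ⟪b, a⟫ ∧ opTrace D = ⟪b, a⟫ := by
  have htp' : IsHilbertTensor (fun (y : H₂) (x : H₁) => tp x y) := htp.flip
  exact ⟨htp.ptCL a b, htp'.ptCL a b, htp.isPartialTrace₂_ptCL a b,
    htp'.isPartialTrace₂_ptCL a b, traceNorm_rankOne' a b,
    htp.traceNorm_ptCL_le a b, htp'.traceNorm_ptCL_le a b, opTrace_rankOne' a b,
    htp.opTrace_ptCL a b, htp'.opTrace_ptCL a b⟩
end
end

section
/- Let X ⊂ H be an N-dimensional subspace of an infinite dimensional separable Hilbert space H, with orthonormal basis x₁,…,x_N, and let Q_n be orthogonal projections converging to the identity in the strong operator topology. Then there exists K ∈ ℕ such that for all n > K, the subspace X_n = Q_n X has dimension N; moreover, if ρ^n are positive semidefinite operators with support in X_n and tr ρ^n ≤ c for all n > K, then some subsequence ρ^{n_k} converges in trace norm to a positive semidefinite operator ρ with support in X. -/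
noncomputable section

open Filter Topology

local notation "⟪" x ", " y "⟫" => @inner ℂ _ _ x y

section Aux

variable {H : Type*} [NormedAddCommGroup H] [InnerProductSpace ℂ H]

/-- rank one operator `v ↦ ⟪a, v⟫ • b` -/
def rk (a b : H) : H →L[ℂ] H := (innerSL ℂ a).smulRight b

@[simp] lemma rk_apply (a b v : H) : rk a b v = ⟪a, v⟫ • b := rfl

lemma rk_norm_apply_le (a b v : H) : ‖rk a b v‖ ≤ ‖a‖ * ‖b‖ * ‖v‖ := by
  rw [rk_apply, norm_smul]
  calc ‖⟪a,v⟫‖ * ‖b‖ ≤ ‖a‖ * ‖v‖ * ‖b‖ := by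
        gcongr; exact norm_inner_le_norm a v
    _ = ‖a‖ * ‖b‖ * ‖v‖ := by ring

lemma rk_sub_rk (a b a' b' : H) :
    rk a b - rk a' b' = rk (a - a') b + rk a' (b - b') := by
  ext v
  simp [inner_sub_left, sub_smul, smul_sub]

lemma key_cs {n : ℕ} {x y : Fin n → H} (hx : Orthonormal ℂ x) (hy : Orthonormal ℂ y)
    (a b : H) : ∑ i, ‖⟪a, x i⟫‖ * ‖⟪b, y i⟫‖ ≤ ‖a‖ * ‖b‖ := by
  have h1 : (∑ i, ‖⟪a, x i⟫‖ * ‖⟪b, y i⟫‖) ^ 2 ≤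
      (∑ i, ‖⟪a, x i⟫‖ ^ 2) * (∑ i, ‖⟪b, y i⟫‖ ^ 2) :=
    Finset.sum_mul_sq_le_sq_mul_sq Finset.univ _ _
  have hxa : ∑ i, ‖⟪a, x i⟫‖ ^ 2 ≤ ‖a‖ ^ 2 := by
    have := hx.sum_inner_products_le (s := Finset.univ) a
    simpa [norm_inner_symm a] using this
  have hyb : ∑ i, ‖⟪b, y i⟫‖ ^ 2 ≤ ‖b‖ ^ 2 := by
    have := hy.sum_inner_products_le (s := Finset.univ) b
    simpa [norm_inner_symm b] using this
  have hnn : (0:ℝ) ≤ ∑ i, ‖⟪a, x i⟫‖ * ‖⟪b, y i⟫‖ :=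
    Finset.sum_nonneg fun i _ => by positivity
  have hsq : (∑ i, ‖⟪a, x i⟫‖ * ‖⟪b, y i⟫‖) ^ 2 ≤ (‖a‖ * ‖b‖) ^ 2 := by
    have hA : (0:ℝ) ≤ ∑ i, ‖⟪a, x i⟫‖ ^ 2 :=
      Finset.sum_nonneg fun i _ => sq_nonneg _
    have hB : (0:ℝ) ≤ ∑ i, ‖⟪b, y i⟫‖ ^ 2 :=
      Finset.sum_nonneg fun i _ => sq_nonneg _
    nlinarith [sq_nonneg ‖a‖, sq_nonneg ‖b‖]
  exact (pow_le_pow_iff_left₀ hnn (by positivity) two_ne_zero).mp hsq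

lemma traceNorm_sum_rk_le {ι : Type*} [Fintype ι] (a b : ι → H) :
    traceNorm (∑ s, rk (a s) (b s)) ≤ ENNReal.ofReal (∑ s, ‖a s‖ * ‖b s‖) := by
  rw [traceNorm]
  refine iSup_le fun n => iSup_le fun x => iSup_le fun hx => iSup_le fun y => iSup_le fun hy => ?_
  have hreal : ∑ i, ‖⟪(∑ s, rk (a s) (b s)) (x i), y i⟫‖ ≤ ∑ s, ‖a s‖ * ‖b s‖ := by
    calc ∑ i, ‖⟪(∑ s, rk (a s) (b s)) (x i), y i⟫‖
        ≤ ∑ i, ∑ s, ‖⟪a s, x i⟫‖ * ‖⟪b s, y i⟫‖ := by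
          refine Finset.sum_le_sum fun i _ => ?_
          have : ⟪(∑ s, rk (a s) (b s)) (x i), y i⟫ =
              ∑ s, (starRingEnd ℂ) ⟪a s, x i⟫ * ⟪b s, y i⟫ := by
            simp [ContinuousLinearMap.sum_apply, inner_smul_left, sum_inner]
            exact Finset.sum_congr rfl fun _ _ => mul_comm _ _
          rw [this]
          refine le_trans (norm_sum_le _ _) (Finset.sum_le_sum fun s _ => ?_)
          rw [norm_mul, RCLike.norm_conj]
      _ = ∑ s, ∑ i, ‖⟪a s, x i⟫‖ * ‖⟪b s, y i⟫‖ := Finset.sum_comm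
      _ ≤ ∑ s, ‖a s‖ * ‖b s‖ := Finset.sum_le_sum fun s _ => key_cs hx hy (a s) (b s)
  calc (∑ i, (‖⟪(∑ s, rk (a s) (b s)) (x i), y i⟫‖₊ : ENNReal))
      = ENNReal.ofReal (∑ i, ‖⟪(∑ s, rk (a s) (b s)) (x i), y i⟫‖) := by
        rw [ENNReal.ofReal_sum_of_nonneg (fun i _ => norm_nonneg _)]
        exact Finset.sum_congr rfl fun i _ => (ofReal_norm _).symm
    _ ≤ _ := ENNReal.ofReal_le_ofReal hreal

lemma expand_span {N : ℕ} {x : Fin N → H} (hx : Orthonormal ℂ x) :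
    ∀ w ∈ Submodule.span ℂ (Set.range x), w = ∑ i, ⟪x i, w⟫ • x i := by
  intro w hw
  let L : H →ₗ[ℂ] H := (∑ i, rk (x i) (x i) : H →L[ℂ] H).toLinearMap - LinearMap.id
  have hgen : Set.range x ⊆ (LinearMap.ker L : Set H) := by
    rintro - ⟨j, rfl⟩
    have : (∑ i, rk (x i) (x i) : H →L[ℂ] H) (x j) = x j := by
      rw [ContinuousLinearMap.sum_apply]
      simp_rw [rk_apply]
      rw [Finset.sum_congr rfl fun i _ => by rw [orthonormal_iff_ite.mp hx i j]]
      simp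
    have hLj : L (x j) = 0 := by
      simp only [L, LinearMap.sub_apply, ContinuousLinearMap.coe_coe,
        LinearMap.id_apply, this, sub_self]
    exact hLj
  have := Submodule.span_le.mpr hgen hw
  have hL : L w = 0 := this
  have : (∑ i, rk (x i) (x i) : H →L[ℂ] H) w = w := by
    have := sub_eq_zero.mp hL
    simpa [L] using this
  conv_lhs => rw [← this]
  rw [ContinuousLinearMap.sum_apply]
  simp

variable [CompleteSpace H]

lemma opTrace_sum_rk {ι : Type*} [Fintype ι] (a b : ι → H) :
    opTrace (∑ s, rk (a s) (b s)) = ∑ s, ⟪a s, b s⟫ := by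
  rw [opTrace]
  have h1 : ∀ e : H, ⟪e, (∑ s, rk (a s) (b s)) e⟫ = ∑ s, ⟪a s, e⟫ * ⟪e, b s⟫ := by
    intro e
    simp [ContinuousLinearMap.sum_apply, inner_sum, inner_smul_right]
  simp_rw [h1]
  rw [Summable.tsum_finsetSum (fun s _ => (hBasis H).summable_inner_mul_inner (a s) (b s))]
  exact Finset.sum_congr rfl fun s _ => (hBasis H).tsum_inner_mul_inner (a s) (b s)

lemma rep_sum_rk {Y : Submodule ℂ H} [CompleteSpace Y] {ρ : H →L[ℂ] H}
    (hker : ∀ v ∈ Yᗮ, ρ v = 0) {ι : Type*} [Fintype ι] (b : OrthonormalBasis ι ℂ Y) :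
    ρ = ∑ i, rk (b i : H) (ρ (b i : H)) := by
  ext v
  have hproj : (Y.orthogonalProjectionOnto v : H) = ∑ i, ⟪(b i : H), v⟫ • (b i : H) := by
    rw [b.orthogonalProjectionOnto_apply_eq_sum]
    push_cast
    rfl
  have hv : ρ v = ρ (Y.orthogonalProjectionOnto v : H) := by
    have : ρ (v - Y.orthogonalProjectionOnto v) = 0 :=
      hker _ (Y.sub_starProjection_mem_orthogonal v)
    rw [map_sub, sub_eq_zero] at this
    exact this
  rw [ContinuousLinearMap.sum_apply, hv, hproj, map_sum]
  simp

section bounds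
variable {Y : Submodule ℂ H} [FiniteDimensional ℂ Y] {ρ : H →L[ℂ] H} {c : ℝ}
  (hpos : ρ.IsPositive) (hker : ∀ v ∈ Yᗮ, ρ v = 0) (htr : (opTrace ρ).re ≤ c)

include hpos hker htr

lemma sq_form_le : ∀ w ∈ Y, (⟪w, ρ w⟫).re ≤ c * ‖w‖ ^ 2 := by
  intro w hw
  rcases eq_or_ne w 0 with rfl | hw0
  · simp
  have hwn : (0:ℝ) < ‖w‖ := norm_pos_iff.mpr hw0
  set u : H := (‖w‖⁻¹ : ℂ) • w with hu
  have huY : u ∈ Y := Y.smul_mem _ hw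
  have hun : ‖u‖ = 1 := by
    rw [hu, norm_smul]
    simp [norm_inv, abs_of_pos hwn, inv_mul_cancel₀ hwn.ne']
  have hunit : (⟪u, ρ u⟫).re ≤ c := by
    set m := Module.finrank ℂ Y with hm
    have hm1 : m ≠ 0 := by
      intro h0
      have : Subsingleton Y := (Module.finrank_zero_iff (R := ℂ) (M := Y)).mp (hm ▸ h0)
      have : (⟨u, huY⟩ : Y) = 0 := Subsingleton.elim _ _
      have : u = 0 := congrArg Subtype.val this
      simp [this] at hun
    obtain ⟨k, hk⟩ : ∃ k, m = k + 1 :=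
      ⟨m - 1, (Nat.succ_pred_eq_of_pos (Nat.pos_of_ne_zero hm1)).symm⟩
    have hcard : Module.finrank ℂ Y = Fintype.card (Fin (k+1)) := by
      rw [← hm, hk, Fintype.card_fin]
    have horth : Orthonormal ℂ (Set.restrict {(0 : Fin (k+1))} (fun _ => (⟨u, huY⟩ : Y))) := by
      constructor
      · intro i; exact hun
      · intro i j hij
        exact absurd (Subtype.ext (by
          have hi := i.2; have hj := j.2
          simp only [Set.mem_singleton_iff] at hi hj
          rw [hi, hj])) hij
    obtain ⟨b, hb⟩ := horth.exists_orthonormalBasis_extension_of_card_eq hcard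
    have hb0 : (b 0 : H) = u := by rw [hb 0 (Set.mem_singleton _)]
    have hrep := rep_sum_rk (Y := Y) hker b
    have htr' : opTrace ρ = ∑ i, ⟪(b i : H), ρ (b i : H)⟫ := by
      conv_lhs => rw [hrep]
      exact opTrace_sum_rk _ _
    have hre : (opTrace ρ).re = ∑ i, (⟪(b i : H), ρ (b i : H)⟫).re := by
      rw [htr']; exact Complex.re_sum _ _
    have hterm : ∀ i, 0 ≤ (⟪(b i : H), ρ (b i : H)⟫).re := fun i => by
      simpa using hpos.re_inner_nonneg_right (b i : H)
    calc (⟪u, ρ u⟫).re = (⟪(b 0 : H), ρ ((b 0 : H))⟫).re := by rw [hb0]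
      _ ≤ ∑ i, (⟪(b i : H), ρ (b i : H)⟫).re :=
          Finset.single_le_sum (f := fun i => (⟪(b i : H), ρ (b i : H)⟫).re)
            (fun i _ => hterm i) (Finset.mem_univ 0)
      _ = (opTrace ρ).re := hre.symm
      _ ≤ c := htr
  have hscale : ⟪w, ρ w⟫ = (‖w‖ : ℂ) ^ 2 * ⟪u, ρ u⟫ := by
    have : w = (‖w‖ : ℂ) • u := by
      rw [hu, smul_smul]
      rw [mul_inv_cancel₀ (by exact_mod_cast hwn.ne')]
      simp
    calc ⟪w, ρ w⟫ = ⟪(‖w‖:ℂ) • u, ρ ((‖w‖:ℂ) • u)⟫ := by rw [← this]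
      _ = (starRingEnd ℂ) (‖w‖:ℂ) * ((‖w‖:ℂ) * ⟪u, ρ u⟫) := by
          rw [map_smul, inner_smul_left, inner_smul_right]
      _ = (‖w‖:ℂ)^2 * ⟪u, ρ u⟫ := by rw [Complex.conj_ofReal]; ring
  rw [hscale]
  have : ((‖w‖ : ℂ) ^ 2 * ⟪u, ρ u⟫).re = ‖w‖ ^ 2 * (⟪u, ρ u⟫).re := by
    rw [show ((‖w‖ : ℂ))^2 = ((‖w‖^2 : ℝ) : ℂ) by push_cast; ring, Complex.re_ofReal_mul]
  rw [this]
  calc ‖w‖ ^ 2 * (⟪u, ρ u⟫).re ≤ ‖w‖ ^ 2 * c :=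
        mul_le_mul_of_nonneg_left hunit (sq_nonneg _)
    _ = c * ‖w‖ ^ 2 := mul_comm _ _

variable (hc : 0 ≤ c)
include hc

lemma re_form_le : ∀ u ∈ Y, ∀ v ∈ Y, |(⟪u, ρ v⟫).re| ≤ c * (‖u‖ + ‖v‖) ^ 2 / 4 := by
  intro u hu v hv
  have hS := (ContinuousLinearMap.isSelfAdjoint_iff_isSymmetric.mp hpos.isSelfAdjoint)
  have hsym : ⟪v, ρ u⟫ = (starRingEnd ℂ) ⟪u, ρ v⟫ := by
    have h1 : ⟪ρ v, u⟫ = ⟪v, ρ u⟫ := hS v u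
    rw [← h1]
    exact (inner_conj_symm _ _).symm
  have hid : ⟪u + v, ρ (u + v)⟫ - ⟪u - v, ρ (u - v)⟫
      = 2 * (⟪u, ρ v⟫ + (starRingEnd ℂ) ⟪u, ρ v⟫) := by
    simp only [map_add, map_sub, inner_add_left, inner_add_right, inner_sub_left,
      inner_sub_right, hsym]
    ring
  have h2 : ((2:ℂ) * (⟪u, ρ v⟫ + (starRingEnd ℂ) ⟪u, ρ v⟫)).re = 4 * (⟪u, ρ v⟫).re := by
    simp only [Complex.mul_re, Complex.add_re, Complex.add_im, Complex.conj_re,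
      Complex.conj_im, Complex.re_ofNat, Complex.im_ofNat]
    ring
  have hre : (⟪u + v, ρ (u + v)⟫).re - (⟪u - v, ρ (u - v)⟫).re = 4 * (⟪u, ρ v⟫).re := by
    rw [← Complex.sub_re, hid, h2]
  have hA0 : 0 ≤ (⟪u + v, ρ (u + v)⟫).re := by
    exact hpos.re_inner_nonneg_right (u + v)
  have hB0 : 0 ≤ (⟪u - v, ρ (u - v)⟫).re := by
    exact hpos.re_inner_nonneg_right (u - v)
  have hAle : (⟪u + v, ρ (u + v)⟫).re ≤ c * (‖u‖ + ‖v‖) ^ 2 := by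
    calc (⟪u + v, ρ (u + v)⟫).re ≤ c * ‖u + v‖ ^ 2 :=
          sq_form_le hpos hker htr _ (Y.add_mem hu hv)
      _ ≤ c * (‖u‖ + ‖v‖) ^ 2 := by
          have := norm_add_le u v
          have h2 : ‖u + v‖ ^ 2 ≤ (‖u‖ + ‖v‖) ^ 2 :=
            pow_le_pow_left₀ (norm_nonneg _) this 2
          exact mul_le_mul_of_nonneg_left h2 hc
  have hBle : (⟪u - v, ρ (u - v)⟫).re ≤ c * (‖u‖ + ‖v‖) ^ 2 := by
    calc (⟪u - v, ρ (u - v)⟫).re ≤ c * ‖u - v‖ ^ 2 :=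
          sq_form_le hpos hker htr _ (Y.sub_mem hu hv)
      _ ≤ c * (‖u‖ + ‖v‖) ^ 2 := by
          have := norm_sub_le u v
          have h2 : ‖u - v‖ ^ 2 ≤ (‖u‖ + ‖v‖) ^ 2 :=
            pow_le_pow_left₀ (norm_nonneg _) this 2
          exact mul_le_mul_of_nonneg_left h2 hc
  rw [abs_le]
  constructor <;> linarith

lemma abs_form_le : ∀ u ∈ Y, ∀ v ∈ Y, ‖⟪u, ρ v⟫‖ ≤ c * (‖u‖ + ‖v‖) ^ 2 := by
  intro u hu v hv
  have him : |(⟪u, ρ v⟫).im| ≤ c * (‖u‖ + ‖v‖) ^ 2 / 4 := by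
    have hvm : (-Complex.I) • v ∈ Y := Y.smul_mem _ hv
    have h1 : ⟪u, ρ ((-Complex.I) • v)⟫ = (-Complex.I) * ⟪u, ρ v⟫ := by
      rw [map_smul, inner_smul_right]
    have h2 : ((-Complex.I) * ⟪u, ρ v⟫).re = (⟪u, ρ v⟫).im := by
      simp [Complex.mul_re]
    have h3 := re_form_le hpos hker htr hc u hu _ hvm
    rw [h1, h2] at h3
    have h4 : ‖(-Complex.I) • v‖ = ‖v‖ := by
      rw [norm_smul]; simp
    rwa [h4] at h3
  have hre := re_form_le hpos hker htr hc u hu v hv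
  have habs : ‖⟪u, ρ v⟫‖ ≤ |(⟪u, ρ v⟫).re| + |(⟪u, ρ v⟫).im| :=
    Complex.norm_le_abs_re_add_abs_im _
  have hsq : (0:ℝ) ≤ c * (‖u‖ + ‖v‖) ^ 2 := by positivity
  linarith

lemma norm_apply_le (hmaps : ∀ v, ρ v ∈ Y) :
    ∀ w ∈ Y, ‖ρ w‖ ≤ c * (1 + ‖w‖) ^ 2 := by
  intro w hw
  rcases eq_or_ne (ρ w) 0 with h0 | h0
  · rw [h0, norm_zero]; positivity
  have hn : (0:ℝ) < ‖ρ w‖ := norm_pos_iff.mpr h0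
  set u : H := ((‖ρ w‖ : ℂ))⁻¹ • ρ w with hu
  have huY : u ∈ Y := Y.smul_mem _ (hmaps w)
  have hun : ‖u‖ = 1 := by
    rw [hu, norm_smul]
    simp [abs_of_pos hn, inv_mul_cancel₀ hn.ne']
  have hinner : ⟪u, ρ w⟫ = (‖ρ w‖ : ℂ) := by
    rw [hu, inner_smul_left, inner_self_eq_norm_sq_to_K]
    rw [map_inv₀, Complex.conj_ofReal]
    have : ((‖ρ w‖ : ℂ)) ≠ 0 := by exact_mod_cast hn.ne'
    field_simp
    rfl
  have := abs_form_le hpos hker htr hc u huY w hw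
  rw [hinner, hun] at this
  simpa [abs_of_pos hn] using this

end bounds

end Aux

set_option maxHeartbeats 1000000 in
/-- Lemma `convfdsup`: for an `N`-dimensional subspace `X` of an infinite
dimensional separable Hilbert space and orthogonal projections `Q_n → I` in the strong
operator topology, eventually `dim Q_n X = N`; moreover, any positive semidefinite
operators `ρ^n` supported in `X_n = Q_n X` with uniformly bounded traces have a
subsequence converging in trace norm to a positive semidefinite operator supported
in `X`. -/
theorem compress_subspace_compactness
    {H : Type*} [NormedAddCommGroup H] [InnerProductSpace ℂ H] [CompleteSpace H]
    [TopologicalSpace.SeparableSpace H] (hH : ¬ FiniteDimensional ℂ H)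
    (X : Submodule ℂ H) [FiniteDimensional ℂ X] (N : ℕ)
    (hN : Module.finrank ℂ X = N)
    (x : Fin N → H) (hx : Orthonormal ℂ x) (hxX : ∀ i, x i ∈ X)
    (hspan : X = Submodule.span ℂ (Set.range x))
    (Q : ℕ → H →L[ℂ] H) (hQsa : ∀ n, IsSelfAdjoint (Q n))
    (hQidem : ∀ n, (Q n).comp (Q n) = Q n)
    (hQI : ∀ v : H, Tendsto (fun n => Q n v) atTop (𝓝 v))
    (c : ℝ) (hc : 0 < c) :
    ∃ K : ℕ, (∀ n, K < n → Module.finrank ℂ (X.map (Q n : H →ₗ[ℂ] H)) = N) ∧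
      ∀ ρs : ℕ → H →L[ℂ] H,
        (∀ n, K < n → (ρs n).IsPositive ∧ (∀ v : H, ρs n v ∈ X.map (Q n : H →ₗ[ℂ] H)) ∧
          (∀ v ∈ (X.map (Q n : H →ₗ[ℂ] H))ᗮ, ρs n v = 0) ∧ (opTrace (ρs n)).re ≤ c) →
        ∃ φ : ℕ → ℕ, StrictMono φ ∧ ∃ ρ' : H →L[ℂ] H, ρ'.IsPositive ∧
          (∀ v : H, ρ' v ∈ X) ∧ (∀ v ∈ Xᗮ, ρ' v = 0) ∧
          Tendsto (fun k => traceNorm (ρs (φ k) - ρ')) atTop (𝓝 0) := by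
  classical
  have hexp : ∀ w ∈ X, w = ∑ i, ⟪x i, w⟫ • x i := by
    intro w hw
    exact expand_span hx w (hspan ▸ hw)
  set S : ℕ → ℝ := fun n => ∑ i, ‖Q n (x i) - x i‖ with hSdef
  have hS0 : Tendsto S atTop (𝓝 0) := by
    have h1 : ∀ i : Fin N, Tendsto (fun n => ‖Q n (x i) - x i‖) atTop (𝓝 0) := by
      intro i
      have := (hQI (x i)).sub_const (x i)
      rw [sub_self] at this
      simpa using this.norm
    have := tendsto_finset_sum (Finset.univ : Finset (Fin N))
      (fun i _ => h1 i)
    simpa [hSdef] using this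
  have hSnn : ∀ n, 0 ≤ S n := fun n => Finset.sum_nonneg fun i _ => norm_nonneg _
  -- key estimate on X
  have hQX : ∀ n, ∀ w ∈ X, ‖Q n w - w‖ ≤ S n * ‖w‖ := by
    intro n w hw
    have hrep : Q n w - w = ∑ i, ⟪x i, w⟫ • (Q n (x i) - x i) := by
      conv_lhs => rw [hexp w hw]
      rw [map_sum, ← Finset.sum_sub_distrib]
      refine Finset.sum_congr rfl fun i _ => ?_
      rw [map_smul, smul_sub]
    rw [hrep]
    calc ‖∑ i, ⟪x i, w⟫ • (Q n (x i) - x i)‖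
        ≤ ∑ i, ‖⟪x i, w⟫ • (Q n (x i) - x i)‖ := norm_sum_le _ _
      _ ≤ ∑ i, ‖w‖ * ‖Q n (x i) - x i‖ := by
          refine Finset.sum_le_sum fun i _ => ?_
          rw [norm_smul]
          have : ‖⟪x i, w⟫‖ ≤ ‖w‖ := by
            have := norm_inner_le_norm (𝕜 := ℂ) (x i) w
            rwa [hx.1 i, one_mul] at this
          exact mul_le_mul_of_nonneg_right this (norm_nonneg _)
      _ = S n * ‖w‖ := by rw [← Finset.mul_sum, mul_comm]
  -- choose K
  obtain ⟨K, hK⟩ : ∃ K, ∀ n ≥ K, S n < 1/2 := by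
    have := (tendsto_order.mp hS0).2 (1/2) (by norm_num)
    exact eventually_atTop.mp this
  -- small perturbation injectivity
  have hinj : ∀ n, S n < 1/2 → ∀ w ∈ X, Q n w = 0 → w = 0 := by
    intro n hSn w hw h0
    by_contra hw0
    have hwn : (0:ℝ) < ‖w‖ := norm_pos_iff.mpr hw0
    have := hQX n w hw
    rw [h0, zero_sub, norm_neg] at this
    nlinarith
  have hdim : ∀ n, K < n → Module.finrank ℂ (X.map (Q n : H →ₗ[ℂ] H)) = N := by
    intro n hn
    have hSn : S n < 1/2 := hK n hn.le
    let f : X →ₗ[ℂ] H := ((Q n : H →ₗ[ℂ] H)).comp X.subtype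
    have hfinj : Function.Injective f := by
      intro a b hab
      have : Q n ((a : H) - (b : H)) = 0 := by
        rw [map_sub, sub_eq_zero]
        exact hab
      have := hinj n hSn _ (X.sub_mem a.2 b.2) this
      exact Subtype.ext (sub_eq_zero.mp this)
    have hrange : LinearMap.range f = X.map (Q n : H →ₗ[ℂ] H) := by
      rw [LinearMap.range_comp, Submodule.range_subtype]
    have := LinearMap.finrank_range_of_inj hfinj
    rw [hrange, hN] at this
    exact this
  refine ⟨K, hdim, ?_⟩
  intro ρs hρs
  set g : ℕ → ℕ := fun n => n + (K + 1) with hgdef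
  have hgK : ∀ n, K < g n := fun n => by simp only [hgdef]; omega
  have hgmono : StrictMono g := fun a b h => by simp only [hgdef]; omega
  have hp : ∀ n, (ρs (g n)).IsPositive := fun n => (hρs _ (hgK n)).1
  have hmapsY : ∀ n, ∀ v : H, ρs (g n) v ∈ X.map (Q (g n) : H →ₗ[ℂ] H) := fun n => (hρs _ (hgK n)).2.1
  have hkerY : ∀ n, ∀ v ∈ (X.map (Q (g n) : H →ₗ[ℂ] H))ᗮ, ρs (g n) v = 0 := fun n => (hρs _ (hgK n)).2.2.1
  have htrY : ∀ n, (opTrace (ρs (g n))).re ≤ c := fun n => (hρs _ (hgK n)).2.2.2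
  have hdimY : ∀ n, Module.finrank ℂ (X.map (Q (g n) : H →ₗ[ℂ] H)) = N := fun n => hdim _ (hgK n)
  have hmapeq : ∀ n, X.map (Q (g n) : H →ₗ[ℂ] H) = X.map ((Q (g n) : H →ₗ[ℂ] H)) := by
    intro n
    ext w
    simp [Submodule.mem_map]
  have hfdY : ∀ n, FiniteDimensional ℂ (X.map (Q (g n) : H →ₗ[ℂ] H)) := by
    intro n
    rw [hmapeq n]
    infer_instance
  have hSgn : ∀ n, S (g n) < 1/2 := fun n => hK _ (le_of_lt (hgK n))
  let zb : ∀ n, OrthonormalBasis (Fin N) ℂ (X.map (Q (g n) : H →ₗ[ℂ] H)) := fun n =>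
    letI := hfdY n
    (stdOrthonormalBasis ℂ _).reindex (finCongr (hdimY n))
  let z : ℕ → Fin N → H := fun n j => (zb n j : H)
  have hzY : ∀ n j, z n j ∈ X.map (Q (g n) : H →ₗ[ℂ] H) := fun n j => (zb n j).2
  have hzn : ∀ n j, ‖z n j‖ = 1 := fun n j => by
    exact (zb n).orthonormal.1 j
  let b : ℕ → Fin N → H := fun n j => ρs (g n) (z n j)
  have hbY : ∀ n j, b n j ∈ X.map (Q (g n) : H →ₗ[ℂ] H) := fun n j => hmapsY n _
  have hbn : ∀ n j, ‖b n j‖ ≤ 4 * c := by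
    intro n j
    haveI := hfdY n
    have := norm_apply_le (hp n) (hkerY n) (htrY n) hc.le (hmapsY n) (z n j) (hzY n j)
    rw [hzn n j] at this
    nlinarith
  have hrep : ∀ n, ρs (g n) = ∑ j, rk (z n j) (b n j) := by
    intro n
    haveI := hfdY n
    exact rep_sum_rk (hkerY n) (zb n)
  -- distance to X
  have hdistX : ∀ n, ∀ w ∈ X.map (Q (g n) : H →ₗ[ℂ] H),
      ‖w - (X.orthogonalProjectionOnto w : H)‖ ≤ 2 * S (g n) * ‖w‖ := by
    intro n w hw
    obtain ⟨v, hvX, hvw⟩ := Submodule.mem_map.mp hw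
    have hvw' : Q (g n) v = w := hvw
    have h1 : ‖w - v‖ ≤ S (g n) * ‖v‖ := by
      rw [← hvw']; exact hQX _ v hvX
    have h2 : ‖v‖ ≤ 2 * ‖w‖ := by
      have h3 : ‖v‖ - ‖w‖ ≤ ‖v - w‖ := norm_sub_norm_le _ _
      rw [norm_sub_rev] at h3
      have := hSgn n
      nlinarith [norm_nonneg v, norm_nonneg w]
    have hmin : ‖w - (X.orthogonalProjectionOnto w : H)‖ ≤ ‖w - v‖ := by
      rw [← Submodule.starProjection_apply, Submodule.starProjection_minimal]
      exact ciInf_le ⟨0, by rintro - ⟨a, rfl⟩; positivity⟩ (⟨v, hvX⟩ : X)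
    calc ‖w - (X.orthogonalProjectionOnto w : H)‖ ≤ ‖w - v‖ := hmin
      _ ≤ S (g n) * ‖v‖ := h1
      _ ≤ S (g n) * (2 * ‖w‖) := mul_le_mul_of_nonneg_left h2 (hSnn _)
      _ = 2 * S (g n) * ‖w‖ := by ring
  -- compactness
  let F : ℕ → (Fin N → X × X) := fun n j =>
    (X.orthogonalProjectionOnto (z n j), X.orthogonalProjectionOnto (b n j))
  have hprojle : ∀ w : H, ‖(X.orthogonalProjectionOnto w : H)‖ ≤ ‖w‖ := by
    intro w
    calc ‖(X.orthogonalProjectionOnto w : H)‖ = ‖X.orthogonalProjectionOnto w‖ := rfl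
      _ ≤ ‖X.orthogonalProjectionOnto‖ * ‖w‖ := (X.orthogonalProjectionOnto).le_opNorm w
      _ ≤ 1 * ‖w‖ := mul_le_mul_of_nonneg_right X.orthogonalProjectionOnto_norm_le (norm_nonneg _)
      _ = ‖w‖ := one_mul _
  have hFnorm : ∀ n, ‖F n‖ ≤ 1 + 4 * c := by
    intro n
    rw [pi_norm_le_iff_of_nonneg (by positivity)]
    intro j
    rw [Prod.norm_def]
    apply max_le
    · calc ‖(F n j).1‖ = ‖((F n j).1 : H)‖ := rfl
        _ ≤ ‖z n j‖ := hprojle _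
        _ = 1 := hzn n j
        _ ≤ 1 + 4 * c := by linarith
    · calc ‖(F n j).2‖ = ‖((F n j).2 : H)‖ := rfl
        _ ≤ ‖b n j‖ := hprojle _
        _ ≤ 4 * c := hbn n j
        _ ≤ 1 + 4 * c := by linarith
  have hcpt : IsCompact (Metric.closedBall (0 : Fin N → X × X) (1 + 4 * c)) :=
    isCompact_closedBall _ _
  obtain ⟨L, hL, φ, hφ, hconv⟩ := hcpt.tendsto_subseq (fun n => by
    rw [Metric.mem_closedBall, dist_zero_right]; exact hFnorm n)
  set U : Fin N → X := fun j => (L j).1 with hUdef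
  set V : Fin N → X := fun j => (L j).2 with hVdef
  have hcomp : ∀ j, Tendsto (fun k => F (φ k) j) atTop (𝓝 (L j)) := fun j =>
    tendsto_pi_nhds.mp hconv j
  have hUconv : ∀ j, Tendsto (fun k => ((F (φ k) j).1 : H)) atTop (𝓝 (U j : H)) := fun j =>
    (continuous_subtype_val.tendsto _).comp ((continuous_fst.tendsto _).comp (hcomp j))
  have hVconv : ∀ j, Tendsto (fun k => ((F (φ k) j).2 : H)) atTop (𝓝 (V j : H)) := fun j =>
    (continuous_subtype_val.tendsto _).comp ((continuous_snd.tendsto _).comp (hcomp j))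
  have hSg : Tendsto (fun k => S (g (φ k))) atTop (𝓝 0) :=
    hS0.comp ((hgmono.comp hφ).tendsto_atTop)
  -- convergence of z and b along the subsequence
  have hzU : ∀ j, Tendsto (fun k => ‖z (φ k) j - (U j : H)‖) atTop (𝓝 0) := by
    intro j
    have hub : ∀ k, ‖z (φ k) j - (U j : H)‖
        ≤ 2 * S (g (φ k)) + ‖((F (φ k) j).1 : H) - (U j : H)‖ := by
      intro k
      have h1 : ‖z (φ k) j - (U j : H)‖ ≤ ‖z (φ k) j - ((F (φ k) j).1 : H)‖
          + ‖((F (φ k) j).1 : H) - (U j : H)‖ := norm_sub_le_norm_sub_add_norm_sub _ _ _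
      have h2 : ‖z (φ k) j - ((F (φ k) j).1 : H)‖ ≤ 2 * S (g (φ k)) := by
        have := hdistX (φ k) _ (hzY (φ k) j)
        rwa [hzn (φ k) j, mul_one] at this
      linarith
    have hupper : Tendsto (fun k => 2 * S (g (φ k)) + ‖((F (φ k) j).1 : H) - (U j : H)‖)
        atTop (𝓝 0) := by
      have h3 : Tendsto (fun k => ‖((F (φ k) j).1 : H) - (U j : H)‖) atTop (𝓝 0) :=
        tendsto_iff_norm_sub_tendsto_zero.mp (hUconv j)
      simpa using (hSg.const_mul 2).add h3
    exact tendsto_of_tendsto_of_tendsto_of_le_of_le tendsto_const_nhds hupper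
      (fun k => norm_nonneg _) hub
  have hbV : ∀ j, Tendsto (fun k => ‖b (φ k) j - (V j : H)‖) atTop (𝓝 0) := by
    intro j
    have hub : ∀ k, ‖b (φ k) j - (V j : H)‖
        ≤ 2 * S (g (φ k)) * (4 * c) + ‖((F (φ k) j).2 : H) - (V j : H)‖ := by
      intro k
      have h1 : ‖b (φ k) j - (V j : H)‖ ≤ ‖b (φ k) j - ((F (φ k) j).2 : H)‖
          + ‖((F (φ k) j).2 : H) - (V j : H)‖ := norm_sub_le_norm_sub_add_norm_sub _ _ _
      have h2 : ‖b (φ k) j - ((F (φ k) j).2 : H)‖ ≤ 2 * S (g (φ k)) * (4 * c) := by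
        have := hdistX (φ k) _ (hbY (φ k) j)
        have h4 := hbn (φ k) j
        nlinarith [hSnn (g (φ k))]
      linarith
    have hupper : Tendsto
        (fun k => 2 * S (g (φ k)) * (4 * c) + ‖((F (φ k) j).2 : H) - (V j : H)‖)
        atTop (𝓝 0) := by
      have h3 : Tendsto (fun k => ‖((F (φ k) j).2 : H) - (V j : H)‖) atTop (𝓝 0) :=
        tendsto_iff_norm_sub_tendsto_zero.mp (hVconv j)
      have h5 : Tendsto (fun k => 2 * S (g (φ k)) * (4 * c)) atTop (𝓝 0) := by
        simpa using ((hSg.const_mul 2).mul_const (4 * c))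
      simpa using h5.add h3
    exact tendsto_of_tendsto_of_tendsto_of_le_of_le tendsto_const_nhds hupper
      (fun k => norm_nonneg _) hub
  have hbpt : ∀ j, Tendsto (fun k => b (φ k) j) atTop (𝓝 (V j : H)) := fun j =>
    tendsto_iff_norm_sub_tendsto_zero.mpr (hbV j)
  -- the limit operator
  set ρ' : H →L[ℂ] H := ∑ j, rk (U j : H) (V j : H) with hρ'def
  -- difference decomposition
  have hdiff : ∀ k, ρs (g (φ k)) - ρ' =
      ∑ j, (rk (z (φ k) j - (U j : H)) (b (φ k) j) + rk (U j : H) (b (φ k) j - (V j : H))) := by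
    intro k
    rw [hrep (φ k), hρ'def, ← Finset.sum_sub_distrib]
    exact Finset.sum_congr rfl fun j _ => rk_sub_rk _ _ _ _
  -- error terms
  set ε : ℕ → ℝ := fun k => ∑ j,
    (‖z (φ k) j - (U j : H)‖ * ‖b (φ k) j‖ + ‖(U j : H)‖ * ‖b (φ k) j - (V j : H)‖) with hεdef
  have hε : Tendsto ε atTop (𝓝 0) := by
    have : ∀ j : Fin N, Tendsto (fun k =>
        ‖z (φ k) j - (U j : H)‖ * ‖b (φ k) j‖ + ‖(U j : H)‖ * ‖b (φ k) j - (V j : H)‖)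
        atTop (𝓝 0) := by
      intro j
      have h1 : Tendsto (fun k => ‖b (φ k) j‖) atTop (𝓝 ‖(V j : H)‖) := (hbpt j).norm
      have h2 := (hzU j).mul h1
      have h3 := (hbV j).const_mul ‖(U j : H)‖
      rw [zero_mul] at h2
      rw [mul_zero] at h3
      simpa using h2.add h3
    have := tendsto_finset_sum (Finset.univ : Finset (Fin N)) (fun j _ => this j)
    simpa [hεdef] using this
  -- pointwise bound
  have hptbd : ∀ k (w : H), ‖(ρs (g (φ k)) - ρ') w‖ ≤ ε k * ‖w‖ := by
    intro k w
    rw [hdiff k]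
    calc ‖(∑ j, (rk (z (φ k) j - (U j : H)) (b (φ k) j)
            + rk (U j : H) (b (φ k) j - (V j : H)))) w‖
        = ‖∑ j, (rk (z (φ k) j - (U j : H)) (b (φ k) j) w
            + rk (U j : H) (b (φ k) j - (V j : H)) w)‖ := by
          rw [ContinuousLinearMap.sum_apply]
          simp [ContinuousLinearMap.add_apply]
      _ ≤ ∑ j, (‖rk (z (φ k) j - (U j : H)) (b (φ k) j) w‖
            + ‖rk (U j : H) (b (φ k) j - (V j : H)) w‖) :=
          le_trans (norm_sum_le _ _) (Finset.sum_le_sum fun j _ => norm_add_le _ _)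
      _ ≤ ∑ j, ((‖z (φ k) j - (U j : H)‖ * ‖b (φ k) j‖) * ‖w‖
            + (‖(U j : H)‖ * ‖b (φ k) j - (V j : H)‖) * ‖w‖) := by
          refine Finset.sum_le_sum fun j _ => ?_
          exact add_le_add (rk_norm_apply_le _ _ _) (rk_norm_apply_le _ _ _)
      _ = ε k * ‖w‖ := by
          rw [hεdef, Finset.sum_mul]
          exact Finset.sum_congr rfl fun j _ => by ring
  have hpt : ∀ w : H, Tendsto (fun k => ρs (g (φ k)) w) atTop (𝓝 (ρ' w)) := by
    intro w
    rw [tendsto_iff_norm_sub_tendsto_zero]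
    have hub : ∀ k, ‖ρs (g (φ k)) w - ρ' w‖ ≤ ε k * ‖w‖ := by
      intro k
      have := hptbd k w
      rwa [ContinuousLinearMap.sub_apply] at this
    refine tendsto_of_tendsto_of_tendsto_of_le_of_le tendsto_const_nhds ?_
      (fun k => norm_nonneg _) hub
    simpa using hε.mul_const ‖w‖
  -- positivity of ρ'
  have hsym' : ρ'.IsPositive := by
    constructor
    · intro a b'
      have h1 : Tendsto (fun k => ⟪ρs (g (φ k)) a, b'⟫) atTop (𝓝 ⟪ρ' a, b'⟫) :=
        (hpt a).inner tendsto_const_nhds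
      have h2 : Tendsto (fun k => ⟪ρs (g (φ k)) a, b'⟫) atTop (𝓝 ⟪a, ρ' b'⟫) := by
        have h3 : Tendsto (fun k => ⟪a, ρs (g (φ k)) b'⟫) atTop (𝓝 ⟪a, ρ' b'⟫) :=
          tendsto_const_nhds.inner (hpt b')
        refine h3.congr fun k => ?_
        exact ((ContinuousLinearMap.isSelfAdjoint_iff_isSymmetric.mp
          (hp (φ k)).isSelfAdjoint) a b').symm
      exact tendsto_nhds_unique h1 h2
    · intro w
      have h1 : Tendsto (fun k => (ρs (g (φ k))).reApplyInnerSelf w) atTop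
          (𝓝 (ρ'.reApplyInnerSelf w)) := by
        simp only [ContinuousLinearMap.reApplyInnerSelf_apply]
        exact (Complex.continuous_re.tendsto _).comp ((hpt w).inner tendsto_const_nhds)
      exact ge_of_tendsto' h1 fun k => (hp (φ k)).2 w
  -- final assembly
  refine ⟨fun k => g (φ k), hgmono.comp hφ, ρ', hsym', ?_, ?_, ?_⟩
  · intro v
    rw [hρ'def, ContinuousLinearMap.sum_apply]
    refine Submodule.sum_mem X fun j _ => ?_
    rw [rk_apply]
    exact X.smul_mem _ (V j).2
  · intro v hv
    rw [hρ'def, ContinuousLinearMap.sum_apply]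
    refine Finset.sum_eq_zero fun j _ => ?_
    rw [rk_apply, (Submodule.mem_orthogonal X v).mp hv _ (U j).2, zero_smul]
  · -- trace norm convergence
    have hbound : ∀ k, traceNorm (ρs (g (φ k)) - ρ') ≤ ENNReal.ofReal (ε k) := by
      intro k
      rw [hdiff k]
      have hsum : ∑ j, (rk (z (φ k) j - (U j : H)) (b (φ k) j)
            + rk (U j : H) (b (φ k) j - (V j : H)))
          = ∑ s : Fin N ⊕ Fin N,
              rk (Sum.elim (fun j => z (φ k) j - (U j : H)) (fun j => (U j : H)) s)
                 (Sum.elim (fun j => b (φ k) j) (fun j => b (φ k) j - (V j : H)) s) := by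
        rw [Fintype.sum_sum_type]
        rw [← Finset.sum_add_distrib]
        simp
      rw [hsum]
      refine le_trans (traceNorm_sum_rk_le _ _) (ENNReal.ofReal_le_ofReal ?_)
      rw [Fintype.sum_sum_type, hεdef, ← Finset.sum_add_distrib]
      simp
    have hofReal : Tendsto (fun k => ENNReal.ofReal (ε k)) atTop (𝓝 0) := by
      have := ENNReal.tendsto_ofReal hε
      simpa using this
    exact tendsto_of_tendsto_of_tendsto_of_le_of_le tendsto_const_nhds hofReal
      (fun k => zero_le) hbound
end
end
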